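/- arXiv:2411.02802 — 10 statements merged into one kernel-verified Lean document; each statement's English description precedes it below -/
import Mathlib

section
/- Let m ∈ ℝ, m₀ := max{0, m}, and fix r₀ > 2m₀ and an integer ℓ ≥ 0. Suppose a : [r₀,∞) → ℝ is twice continuously differentiable, solves the Schwarzschild radial ODE with parameters (m, r₀, ℓ), satisfies the Bartnik initial condition, and satisfies a(r) → 0 and a'(r) → 0 as r → ∞. Then a(r) = 0 for all r ≥ r₀. -/
open Set Filter

open Topology


lemma hasDeriv_B (m r₀ L C : ℝ) (hr0 : 0 < r₀) (hm : 2*m < r₀) (a A' : ℝ → ℝ)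
    (hda : ∀ r ∈ Ici r₀, HasDerivWithinAt a (A' r) (Ici r₀) r)
    (hg : ∀ r ∈ Ici r₀, HasDerivWithinAt (fun s => s * (s - 2*m) * A' s)
        ((4*m^2/(r*(r-2*m)) + L) * a r - (2*m/(r*(r-2*m))) * C) (Ici r₀) r) :
    ∀ r ∈ Ici r₀, HasDerivWithinAt
      (fun s => (s*(s-2*m)*A' s + 2*m*a s - C) * (s/(s-2*m)))
      (L * a r * (r/(r-2*m))) (Ici r₀) r := by
  intro r hr
  have hrpos : 0 < r := lt_of_lt_of_le hr0 hr
  have hrm : 0 < r - 2*m := by have := hr; simp only [mem_Ici] at this; linarith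
  have hb : HasDerivWithinAt (fun s => s*(s-2*m)*A' s + 2*m*a s - C)
      (((4*m^2/(r*(r-2*m)) + L) * a r - (2*m/(r*(r-2*m))) * C) + 2*m*A' r) (Ici r₀) r :=
    ((hg r hr).add ((hda r hr).const_mul (2*m))).sub_const C
  have hψ : HasDerivAt (fun s : ℝ => s/(s-2*m)) ((1*(r-2*m) - r*1)/(r-2*m)^2) r :=
    (hasDerivAt_id r).div ((hasDerivAt_id r).sub_const (2*m)) (by linarith)
  have := hb.mul hψ.hasDerivWithinAt
  refine this.congr_deriv ?_
  have hne : r - m*2 ≠ 0 := by linarith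
  field_simp [hrm.ne', hrpos.ne']
  ring

lemma hasDeriv_D (m r₀ L C : ℝ) (hr0 : 0 < r₀) (hm : 2*m < r₀) (a A' : ℝ → ℝ)
    (hda : ∀ r ∈ Ici r₀, HasDerivWithinAt a (A' r) (Ici r₀) r)
    (hg : ∀ r ∈ Ici r₀, HasDerivWithinAt (fun s => s * (s - 2*m) * A' s)
        ((4*m^2/(r*(r-2*m)) + L) * a r - (2*m/(r*(r-2*m))) * C) (Ici r₀) r) :
    ∀ r ∈ Ici r₀, HasDerivWithinAt
      (fun s => (s*(s-2*m)*A' s - 2*m*a s + C) * ((s-2*m)/s))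
      (L * a r * ((r-2*m)/r)) (Ici r₀) r := by
  intro r hr
  have hrpos : 0 < r := lt_of_lt_of_le hr0 hr
  have hrm : 0 < r - 2*m := by have := hr; simp only [mem_Ici] at this; linarith
  have hb : HasDerivWithinAt (fun s => s*(s-2*m)*A' s - 2*m*a s + C)
      (((4*m^2/(r*(r-2*m)) + L) * a r - (2*m/(r*(r-2*m))) * C) - 2*m*A' r) (Ici r₀) r :=
    ((hg r hr).sub ((hda r hr).const_mul (2*m))).add_const C
  have hψ : HasDerivAt (fun s : ℝ => (s-2*m)/s) ((1*r - (r-2*m)*1)/r^2) r :=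
    ((hasDerivAt_id r).sub_const (2*m)).div (hasDerivAt_id r) hrpos.ne'
  have := hb.mul hψ.hasDerivWithinAt
  refine this.congr_deriv ?_
  have hne : r - m*2 ≠ 0 := by linarith
  field_simp [hrm.ne', hrpos.ne']
  ring



lemma exists_isMaxOn_of_tendsto {a : ℝ → ℝ} {r₀ x : ℝ} (hx : x ∈ Ici r₀) (hax : 0 < a x)
    (hcont : ContinuousOn a (Ici r₀)) (hlim : Tendsto a atTop (nhds 0)) :
    ∃ ρ ∈ Ici r₀, 0 < a ρ ∧ ∀ r ∈ Ici r₀, a r ≤ a ρ := by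
  have hev : ∀ᶠ r in atTop, a r < a x := Tendsto.eventually_lt_const hax hlim
  obtain ⟨R, hR⟩ := eventually_atTop.mp hev
  set R' := max R x with hR'
  have hxR : x ≤ R' := le_max_right _ _
  obtain ⟨ρ, hρ, hρmax⟩ := isCompact_Icc.exists_isMaxOn ⟨x, hx, hxR⟩
    (hcont.mono Icc_subset_Ici_self)
  refine ⟨ρ, hρ.1, lt_of_lt_of_le hax (hρmax ⟨hx, hxR⟩), ?_⟩
  intro r hr
  rcases le_or_gt r R' with h | h
  · exact hρmax ⟨hr, h⟩
  · exact (hR r (le_trans (le_max_left _ _) h.le)).le.trans (hρmax ⟨hx, hxR⟩)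

lemma right_deriv_nonpos_of_max {a : ℝ → ℝ} {r₀ A0 : ℝ}
    (hd : HasDerivWithinAt a A0 (Ici r₀) r₀) (hmax : ∀ r ∈ Ici r₀, a r ≤ a r₀) : A0 ≤ 0 := by
  have h := hasDerivWithinAt_iff_tendsto_slope.mp hd
  rw [Ici_sdiff_left] at h
  haveI : (𝓝[Ioi r₀] r₀).NeBot := nhdsGT_neBot r₀
  refine le_of_tendsto h ?_
  filter_upwards [self_mem_nhdsWithin] with r (hr : r ∈ Ioi r₀)
  rw [slope_def_field]
  have h1 : a r - a r₀ ≤ 0 := by have := hmax r (mem_Ici.mpr (le_of_lt hr)); linarith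
  have h2 : 0 < r - r₀ := by simpa using hr
  exact div_nonpos_of_nonpos_of_nonneg h1 h2.le

lemma schw_max_principle (m r₀ L C : ℝ) (hr0 : 0 < r₀) (hm : 2*m < r₀) (hL : 2 ≤ L)
    (a A' : ℝ → ℝ)
    (hda : ∀ r ∈ Ici r₀, HasDerivWithinAt a (A' r) (Ici r₀) r)
    (hg : ∀ r ∈ Ici r₀, HasDerivWithinAt (fun s => s * (s - 2*m) * A' s)
        ((4*m^2/(r*(r-2*m)) + L) * a r - (2*m/(r*(r-2*m))) * C) (Ici r₀) r)
    (hb0 : r₀*(r₀-2*m) * A' r₀ = (L*r₀/2 - m) * a r₀)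
    (hlim : Tendsto a atTop (nhds 0))
    (hex : ∃ x ∈ Ici r₀, 0 < a x) :
    0 < 2*m*C := by
  obtain ⟨x, hx, hax⟩ := hex
  have hcont : ContinuousOn a (Ici r₀) := fun r hr => (hda r hr).continuousWithinAt
  obtain ⟨ρ, hρ, hρpos, hρmax⟩ := exists_isMaxOn_of_tendsto hx hax hcont hlim
  have hρr0 : r₀ ≤ ρ := hρ
  have hρ0 : 0 < ρ := lt_of_lt_of_le hr0 hρr0
  have hρm : 0 < ρ - 2*m := by linarith
  rcases eq_or_lt_of_le hρr0 with heq | hlt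
  · -- boundary max: contradiction with Bartnik sign
    exfalso
    have hA0 : A' r₀ ≤ 0 := by
      refine right_deriv_nonpos_of_max (hda r₀ (mem_Ici.mpr le_rfl)) ?_
      intro r hr; rw [← heq] at hρmax; exact hρmax r hr
    have ha0pos : 0 < a r₀ := by rw [← heq] at hρpos; exact hρpos
    have h1 : r₀ ≤ L*r₀/2 := by nlinarith
    have h2 : 0 < r₀ - m := by rcases le_or_gt m 0 with h | h <;> linarith
    have h3 : 0 < (L*r₀/2 - m) * a r₀ := mul_pos (by linarith) ha0pos
    have h4 : r₀*(r₀-2*m) * A' r₀ ≤ 0 :=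
      mul_nonpos_of_nonneg_of_nonpos (by nlinarith) hA0
    linarith [hb0 ▸ h4]
  · -- interior max
    have hmem : Ici r₀ ∈ 𝓝 ρ := Ici_mem_nhds hlt
    have hA'ρ : A' ρ = 0 := by
      have hd : HasDerivAt a (A' ρ) ρ := (hda ρ hρ).hasDerivAt hmem
      have hloc : IsLocalMax a ρ := by
        filter_upwards [hmem] with r hr; exact hρmax r hr
      exact hloc.hasDerivAt_eq_zero hd
    have hp : 0 < ρ*(ρ-2*m) := mul_pos hρ0 hρm
    have hkey : (4*m^2/(ρ*(ρ-2*m)) + L) * a ρ - (2*m/(ρ*(ρ-2*m))) * C ≤ 0 := by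
      by_contra hpos
      push_neg at hpos
      -- continuity of the RHS at ρ
      have hca : ContinuousAt a ρ := hcont.continuousAt hmem
      have hden : ContinuousAt (fun r : ℝ => r*(r-2*m)) ρ := by fun_prop
      have hcR : ContinuousAt
          (fun r => (4*m^2/(r*(r-2*m)) + L) * a r - (2*m/(r*(r-2*m))) * C) ρ :=
        (((continuousAt_const.div hden hp.ne').add continuousAt_const).mul hca).sub
          ((continuousAt_const.div hden hp.ne').mul continuousAt_const)
      have hev : ∀ᶠ r in 𝓝 ρ, 0 < (4*m^2/(r*(r-2*m)) + L) * a r - (2*m/(r*(r-2*m))) * C :=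
        hcR.eventually_const_lt hpos
      obtain ⟨ε, hε, hball⟩ := Metric.eventually_nhds_iff.mp hev
      set v := ρ + ε/2 with hv
      have hρv : ρ < v := by simp [hv]; linarith
      have hsub : Icc ρ v ⊆ Ici r₀ := fun y hy => le_trans hρr0 hy.1
      have hRpos : ∀ y ∈ Icc ρ v, 0 < (4*m^2/(y*(y-2*m)) + L) * a y - (2*m/(y*(y-2*m))) * C := by
        intro y hy
        refine hball ?_
        rw [Real.dist_eq, abs_lt]
        constructor <;> [linarith [hy.1]; skip]
        have := hy.2; simp only [hv] at this; linarith
      -- g is strictly monotone on Icc ρ v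
      have hgmono : StrictMonoOn (fun s => s * (s - 2*m) * A' s) (Icc ρ v) := by
        refine strictMonoOn_of_hasDerivWithinAt_pos
          (f' := fun y => (4*m^2/(y*(y-2*m)) + L) * a y - (2*m/(y*(y-2*m))) * C)
          (convex_Icc _ _)
          (fun y hy => ((hg y (hsub hy)).continuousWithinAt).mono hsub) ?_ ?_
        · intro y hy
          rw [interior_Icc] at hy
          exact (hg y (hsub (Ioo_subset_Icc_self hy))).mono
            (by rw [interior_Icc]; exact fun z hz => hsub (Ioo_subset_Icc_self hz))
        · intro y hy
          rw [interior_Icc] at hy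
          exact hRpos y (Ioo_subset_Icc_self hy)
      have hgρ : ρ * (ρ - 2*m) * A' ρ = 0 := by rw [hA'ρ]; ring
      have hA'pos : ∀ y ∈ Ioc ρ v, 0 < A' y := by
        intro y hy
        have h1 : (0:ℝ) < y * (y - 2*m) * A' y := by
          have := hgmono (left_mem_Icc.mpr hρv.le) ⟨hy.1.le, hy.2⟩ hy.1
          simpa [hgρ] using this
        have hy0 : 0 < y := lt_trans hρ0 hy.1
        have hym : 0 < y - 2*m := by linarith [hy.1]
        by_contra hc
        push_neg at hc
        linarith [mul_nonpos_of_nonneg_of_nonpos (mul_pos hy0 hym).le hc]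
      -- a is strictly monotone on Icc ρ v then, contradiction with max
      have hamono : StrictMonoOn a (Icc ρ v) := by
        refine strictMonoOn_of_hasDerivWithinAt_pos (f' := A') (convex_Icc _ _)
          (hcont.mono hsub) ?_ ?_
        · intro y hy
          rw [interior_Icc] at hy
          exact (hda y (hsub (Ioo_subset_Icc_self hy))).mono
            (by rw [interior_Icc]; exact fun z hz => hsub (Ioo_subset_Icc_self hz))
        · intro y hy
          rw [interior_Icc] at hy
          exact hA'pos y ⟨hy.1, hy.2.le⟩
      have : a ρ < a v := hamono (left_mem_Icc.mpr hρv.le) (right_mem_Icc.mpr hρv.le) hρv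
      have := hρmax v (hsub (right_mem_Icc.mpr hρv.le))
      linarith
    -- multiply hkey by p
    have h3 := mul_le_mul_of_nonneg_left hkey hp.le
    have h4 : (4*m^2 + L*(ρ*(ρ-2*m))) * a ρ ≤ 2*m*C := by
      have hne : ρ*(ρ-2*m) ≠ 0 := hp.ne'
      field_simp at h3
      nlinarith [h3]
    nlinarith [mul_pos (mul_pos (lt_of_lt_of_le (by norm_num : (0:ℝ) < 2) hL) hp) hρpos,
      sq_nonneg m, mul_pos hp hρpos]

lemma schw_nonneg_zero (m r₀ L C : ℝ) (hr0 : 0 < r₀) (hm : 2*m < r₀) (hL : 2 ≤ L)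
    (a A' : ℝ → ℝ)
    (hda : ∀ r ∈ Ici r₀, HasDerivWithinAt a (A' r) (Ici r₀) r)
    (hg : ∀ r ∈ Ici r₀, HasDerivWithinAt (fun s => s * (s - 2*m) * A' s)
        ((4*m^2/(r*(r-2*m)) + L) * a r - (2*m/(r*(r-2*m))) * C) (Ici r₀) r)
    (hb0 : r₀*(r₀-2*m) * A' r₀ = (L*r₀/2 - m) * a r₀)
    (hC : C = (3*m - r₀ + L*r₀/2) * a r₀)
    (hlim : Tendsto a atTop (nhds 0))
    (hnn : ∀ r ∈ Ici r₀, 0 ≤ a r) :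
    ∀ r ∈ Ici r₀, a r = 0 := by
  by_contra hcon
  push_neg at hcon
  obtain ⟨x, hx, hxne⟩ := hcon
  have hax : 0 < a x := lt_of_le_of_ne (hnn x hx) (Ne.symm hxne)
  have hcont : ContinuousOn a (Ici r₀) := fun r hr => (hda r hr).continuousWithinAt
  have hr₀2m : 0 < r₀ - 2*m := by linarith
  -- an interval [x, v] on which a > a x / 2
  have hev : ∀ᶠ r in 𝓝[Ici r₀] x, a x/2 < a r :=
    (hcont x hx).eventually_const_lt (half_lt_self hax)
  obtain ⟨δ, hδ, hball⟩ := Metric.mem_nhdsWithin_iff.mp hev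
  set v := x + δ/2 with hv
  have hxv : x < v := by simp only [hv]; linarith
  have hxr0 : r₀ ≤ x := hx
  have hsub : Icc x v ⊆ Ici r₀ := fun y hy => le_trans hxr0 hy.1
  have hhalf : ∀ y ∈ Icc x v, a x/2 < a y := by
    intro y hy
    refine hball ⟨?_, hsub hy⟩
    rw [Metric.mem_ball, Real.dist_eq, abs_lt]
    have h2 := hy.2
    simp only [hv] at h2
    exact ⟨by linarith [hy.1], by linarith⟩
  -- the two monotone quantities
  set B : ℝ → ℝ := fun s => (s*(s-2*m)*A' s + 2*m*a s - C) * (s/(s-2*m)) with hBdef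
  set D : ℝ → ℝ := fun s => (s*(s-2*m)*A' s - 2*m*a s + C) * ((s-2*m)/s) with hDdef
  have hB' := hasDeriv_B m r₀ L C hr0 hm a A' hda hg
  have hD' := hasDeriv_D m r₀ L C hr0 hm a A' hda hg
  have hBcont : ContinuousOn B (Ici r₀) := fun r hr => (hB' r hr).continuousWithinAt
  have hDcont : ContinuousOn D (Ici r₀) := fun r hr => (hD' r hr).continuousWithinAt
  have hPos : ∀ y : ℝ, y ∈ Ioi r₀ → 0 < y ∧ 0 < y - 2*m := by
    intro y hy
    have : r₀ < y := hy
    exact ⟨by linarith, by linarith⟩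
  have hBmono : MonotoneOn B (Ici r₀) := by
    refine monotoneOn_of_hasDerivWithinAt_nonneg (f' := fun y => L * a y * (y/(y-2*m)))
      (convex_Ici r₀) hBcont ?_ ?_
    · intro y hy
      rw [interior_Ici] at hy
      exact (hB' y (mem_Ici.mpr (le_of_lt (mem_Ioi.mp hy)))).mono (interior_Ici (a := r₀) ▸ Ioi_subset_Ici_self)
    · intro y hy
      rw [interior_Ici] at hy
      obtain ⟨h1, h2⟩ := hPos y hy
      have := hnn y (mem_Ici.mpr (le_of_lt (mem_Ioi.mp hy)))
      positivity
  have hDmono : MonotoneOn D (Ici r₀) := by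
    refine monotoneOn_of_hasDerivWithinAt_nonneg (f' := fun y => L * a y * ((y-2*m)/y))
      (convex_Ici r₀) hDcont ?_ ?_
    · intro y hy
      rw [interior_Ici] at hy
      exact (hD' y (mem_Ici.mpr (le_of_lt (mem_Ioi.mp hy)))).mono (interior_Ici (a := r₀) ▸ Ioi_subset_Ici_self)
    · intro y hy
      rw [interior_Ici] at hy
      obtain ⟨h1, h2⟩ := hPos y hy
      have := hnn y (mem_Ici.mpr (le_of_lt (mem_Ioi.mp hy)))
      positivity
  -- initial values
  have ha0 : 0 ≤ a r₀ := hnn r₀ (mem_Ici.mpr le_rfl)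
  have hB0 : B r₀ = r₀ * a r₀ := by
    simp only [hBdef]
    rw [hb0, hC]
    field_simp
    ring
  have hD0 : D r₀ = (r₀-2*m) * (L-1) * a r₀ := by
    simp only [hDdef]
    rw [hb0, hC]
    field_simp
    ring
  have hD0nn : 0 ≤ D r₀ := by rw [hD0]; have : (0:ℝ) ≤ L - 1 := by linarith
                              positivity
  have hB0nn : 0 ≤ B r₀ := by rw [hB0]; positivity
  -- B strictly increases on [x, v]
  have hBstrict : StrictMonoOn B (Icc x v) := by
    refine strictMonoOn_of_hasDerivWithinAt_pos (f' := fun y => L * a y * (y/(y-2*m)))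
      (convex_Icc _ _) (hBcont.mono hsub) ?_ ?_
    · intro y hy
      rw [interior_Icc] at hy
      exact (hB' y (hsub (Ioo_subset_Icc_self hy))).mono
        (by rw [interior_Icc]; exact fun z hz => hsub (Ioo_subset_Icc_self hz))
    · intro y hy
      rw [interior_Icc] at hy
      have hy' := hsub (Ioo_subset_Icc_self hy)
      have h1 : 0 < y := lt_of_lt_of_le hr0 hy'
      have h2 : 0 < y - 2*m := by have : r₀ ≤ y := hy'; linarith
      have h3 : 0 < a y := lt_trans (by positivity) (hhalf y (Ioo_subset_Icc_self hy))
      have hL0 : 0 < L := by linarith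
      positivity
  have hBv : 0 < B v := by
    have h1 : B x < B v := hBstrict (left_mem_Icc.mpr hxv.le) (right_mem_Icc.mpr hxv.le) hxv
    have h2 : B r₀ ≤ B x := hBmono (mem_Ici.mpr le_rfl) hx hxr0
    linarith
  have hvIci : v ∈ Ici r₀ := hsub (right_mem_Icc.mpr hxv.le)
  -- A' is positive beyond v
  have hA'pos : ∀ r ∈ Ioi v, 0 < A' r := by
    intro r hr
    have hrv : v < r := hr
    have hrIci : r ∈ Ici r₀ := le_trans hvIci hrv.le
    have hr1 : 0 < r := lt_of_lt_of_le hr0 hrIci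
    have hr2 : 0 < r - 2*m := by have : r₀ ≤ r := hrIci; linarith
    have hBr : 0 < B r := lt_of_lt_of_le hBv (hBmono hvIci hrIci hrv.le)
    have hDr : 0 ≤ D r := le_trans hD0nn (hDmono (mem_Ici.mpr le_rfl) hrIci hrIci)
    have hbpos : 0 < r*(r-2*m)*A' r + 2*m*a r - C := by
      by_contra hc
      push_neg at hc
      have : B r ≤ 0 := by
        simp only [hBdef]
        exact mul_nonpos_of_nonpos_of_nonneg hc (by positivity)
      linarith
    have hcnn : 0 ≤ r*(r-2*m)*A' r - 2*m*a r + C := by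
      by_contra hc
      push_neg at hc
      have : D r < 0 := by
        simp only [hDdef]
        exact mul_neg_of_neg_of_pos hc (by positivity)
      linarith
    have hsum : 0 < 2 * (r*(r-2*m)) * A' r := by nlinarith
    by_contra hc
    push_neg at hc
    nlinarith [mul_pos hr1 hr2]
  -- a is strictly monotone on [v, ∞), contradiction with decay
  have hamono : StrictMonoOn a (Ici v) := by
    refine strictMonoOn_of_hasDerivWithinAt_pos (f' := A') (convex_Ici v)
      (hcont.mono (Ici_subset_Ici.mpr hvIci)) ?_ ?_
    · intro y hy
      rw [interior_Ici] at hy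
      exact (hda y (mem_Ici.mpr (le_trans (mem_Ici.mp hvIci) (le_of_lt (mem_Ioi.mp hy))))).mono
        (by rw [interior_Ici]; exact fun z (hz : v < z) => le_trans hvIci hz.le)
    · intro y hy
      rw [interior_Ici] at hy
      exact hA'pos y hy
  have h1 : a v < a (v+1) :=
    hamono (mem_Ici.mpr le_rfl) (mem_Ici.mpr (by linarith)) (by linarith)
  have h2 : a (v+1) ≤ 0 := by
    refine ge_of_tendsto hlim ?_
    rw [eventually_atTop]
    exact ⟨v+2, fun r hr => (hamono (mem_Ici.mpr (by linarith)) (mem_Ici.mpr (by linarith))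
      (by linarith)).le⟩
  have h3 : 0 < a v := lt_trans (by positivity) (hhalf v (right_mem_Icc.mpr hxv.le))
  linarith

lemma const_of_hasDerivWithinAt_zero {f : ℝ → ℝ} {r₀ : ℝ}
    (hf : ∀ r ∈ Ici r₀, HasDerivWithinAt f 0 (Ici r₀) r) :
    ∀ r ∈ Ici r₀, f r = f r₀ := by
  have hc : ContinuousOn f (Ici r₀) := fun r hr => (hf r hr).continuousWithinAt
  have hmono : MonotoneOn f (Ici r₀) :=
    monotoneOn_of_hasDerivWithinAt_nonneg (f' := fun _ => (0:ℝ)) (convex_Ici r₀) hc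
      (fun y hy => (hf y (interior_subset hy)).mono interior_subset) (fun y _ => le_rfl)
  have hanti : AntitoneOn f (Ici r₀) :=
    antitoneOn_of_hasDerivWithinAt_nonpos (f' := fun _ => (0:ℝ)) (convex_Ici r₀) hc
      (fun y hy => (hf y (interior_subset hy)).mono interior_subset) (fun y _ => le_rfl)
  intro r hr
  exact le_antisymm (hanti (mem_Ici.mpr le_rfl) hr hr) (hmono (mem_Ici.mpr le_rfl) hr hr)



set_option maxHeartbeats 1000000 in
/-- A `C²` solution of the Schwarzschild radial ODE with parameters
`(m, r₀, ℓ)`, satisfying the Bartnik initial condition and decaying together with its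
derivative at infinity, vanishes identically on `[r₀, ∞)`. -/
theorem schwarzschild_radial_ode_decay_implies_zero
    (m r₀ : ℝ) (hr₀ : 2 * max 0 m < r₀) (ℓ : ℕ)
    (a : ℝ → ℝ) (ha : ContDiffOn ℝ 2 a (Ici r₀))
    (hode : ∀ r ∈ Ici r₀,
      derivWithin (fun s => s * (s - 2 * m) * derivWithin a (Ici r₀) s) (Ici r₀) r
        = (4 * m ^ 2 / (r * (r - 2 * m)) + (ℓ : ℝ) * ((ℓ : ℝ) + 1)) * a r
          - (2 * m / (r * (r - 2 * m))) *
            ((4 * m - r₀) * a r₀ + r₀ * (r₀ - 2 * m) * derivWithin a (Ici r₀) r₀))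
    (hinit : derivWithin a (Ici r₀) r₀
        = (1 / (2 * (r₀ - 2 * m))) * ((ℓ : ℝ) * ((ℓ : ℝ) + 1) - 2 * m / r₀) * a r₀)
    (hlima : Tendsto a atTop (nhds 0))
    (hlima' : Tendsto (derivWithin a (Ici r₀)) atTop (nhds 0)) :
    ∀ r ∈ Ici r₀, a r = 0 := by

  have hr0 : 0 < r₀ := lt_of_le_of_lt (by positivity) hr₀
  have hm : 2*m < r₀ := lt_of_le_of_lt (by nlinarith [le_max_right (0:ℝ) m]) hr₀
  have hrm : 0 < r₀ - 2*m := by linarith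
  set A' : ℝ → ℝ := derivWithin a (Ici r₀) with hA'def
  set L : ℝ := (ℓ : ℝ) * ((ℓ : ℝ) + 1) with hLdef
  set C : ℝ := (4 * m - r₀) * a r₀ + r₀ * (r₀ - 2 * m) * A' r₀ with hCdef
  -- differentiability data
  have hda : ∀ r ∈ Ici r₀, HasDerivWithinAt a (A' r) (Ici r₀) r := by
    intro r hr
    exact ((ha.differentiableOn (by norm_num)) r hr).hasDerivWithinAt
  have hA'C1 : ContDiffOn ℝ 1 A' (Ici r₀) :=
    ha.derivWithin (uniqueDiffOn_Ici r₀) (by norm_num)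
  have hpoly : ContDiffOn ℝ 1 (fun s : ℝ => s * (s - 2*m)) (Ici r₀) :=
    (contDiff_id.mul (contDiff_id.sub contDiff_const)).contDiffOn
  have hgdiff : DifferentiableOn ℝ (fun s => s * (s - 2*m) * A' s) (Ici r₀) :=
    (hpoly.mul hA'C1).differentiableOn one_ne_zero
  have hg : ∀ r ∈ Ici r₀, HasDerivWithinAt (fun s => s * (s - 2*m) * A' s)
      ((4*m^2/(r*(r-2*m)) + L) * a r - (2*m/(r*(r-2*m))) * C) (Ici r₀) r := by
    intro r hr
    have h1 := (hgdiff r hr).hasDerivWithinAt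
    rw [hode r hr] at h1
    exact h1
  -- initial conditions
  have hb0 : r₀*(r₀-2*m) * A' r₀ = (L*r₀/2 - m) * a r₀ := by
    rw [hinit]
    field_simp
  have hC : C = (3*m - r₀ + L*r₀/2) * a r₀ := by
    rw [hCdef, hinit]
    have hne : r₀ - m*2 ≠ 0 := by linarith
    field_simp [hrm.ne', hr0.ne']
    ring
  have hLval : L = (ℓ : ℝ) * ((ℓ : ℝ) + 1) := hLdef
  clear_value A' L C
  clear hode hinit hCdef hA'def hlima' ha hA'C1 hpoly hgdiff
  -- negated data (for symmetry arguments)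
  have hda_neg : ∀ r ∈ Ici r₀, HasDerivWithinAt (fun s => -(a s)) (-(A' r)) (Ici r₀) r :=
    fun r hr => (hda r hr).neg
  have hg_neg : ∀ r ∈ Ici r₀, HasDerivWithinAt (fun s => s * (s - 2*m) * (-(A' s)))
      ((4*m^2/(r*(r-2*m)) + L) * (-(a r)) - (2*m/(r*(r-2*m))) * (-C)) (Ici r₀) r := by
    intro r hr
    have h1 := (hg r hr).neg
    have h2 : HasDerivWithinAt (fun s => s * (s - 2*m) * (-(A' s)))
        (-((4*m^2/(r*(r-2*m)) + L) * a r - (2*m/(r*(r-2*m))) * C)) (Ici r₀) r :=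
      h1.congr (fun y _ => by simp only [Pi.neg_apply]; ring) (by simp only [Pi.neg_apply]; ring)
    convert h2 using 1
    ring
  have hb0_neg : r₀*(r₀-2*m) * (-(A' r₀)) = (L*r₀/2 - m) * (-(a r₀)) := by
    linear_combination -hb0
  have hC_neg : -C = (3*m - r₀ + L*r₀/2) * (-(a r₀)) := by linear_combination -hC
  have hlim_neg : Tendsto (fun r => -(a r)) atTop (nhds 0) := by
    simpa using hlima.neg
  rcases Nat.eq_zero_or_pos ℓ with h0 | h1
  · -- case ℓ = 0
    have hL0 : L = 0 := by rw [hLval, h0]; norm_num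
    by_cases hm0 : m = 0
    · -- subcase m = 0 : r² A' is constant and zero initially
      have hgz : ∀ r ∈ Ici r₀, HasDerivWithinAt (fun s => s * (s - 2*m) * A' s) 0 (Ici r₀) r := by
        intro r hr
        have h1 := hg r hr
        have hval : (4*m^2/(r*(r-2*m)) + L) * a r - (2*m/(r*(r-2*m))) * C = 0 := by
          rw [hL0, hm0]; norm_num
        rwa [hval] at h1
      have hconst := const_of_hasDerivWithinAt_zero hgz
      have hg0 : r₀ * (r₀ - 2*m) * A' r₀ = 0 := by
        rw [hb0, hL0, hm0]; ring
      have haz : ∀ r ∈ Ici r₀, HasDerivWithinAt a 0 (Ici r₀) r := by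
        intro r hr
        have hr1 : 0 < r := lt_of_lt_of_le hr0 hr
        have hr2 : 0 < r - 2*m := by have : r₀ ≤ r := hr; linarith
        have h1 := hconst r hr
        rw [hg0] at h1
        have hA'z : A' r = 0 := by
          have h2 : r * (r - 2*m) ≠ 0 := by positivity
          exact (mul_eq_zero.mp h1).resolve_left h2
        have := hda r hr
        rwa [hA'z] at this
      have haconst := const_of_hasDerivWithinAt_zero haz
      have ha0 : a r₀ = 0 := by
        have h1 : Tendsto a atTop (nhds (a r₀)) := by
          refine tendsto_const_nhds.congr' ?_
          filter_upwards [eventually_ge_atTop r₀] with r hr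
          exact (haconst r hr).symm
        exact tendsto_nhds_unique h1 hlima
      intro r hr
      rw [haconst r hr, ha0]
    · -- subcase m ≠ 0 : explicit solution
      have hB' := hasDeriv_B m r₀ L C hr0 hm a A' hda hg
      have hD' := hasDeriv_D m r₀ L C hr0 hm a A' hda hg
      have hBz : ∀ r ∈ Ici r₀, HasDerivWithinAt
          (fun s => (s*(s-2*m)*A' s + 2*m*a s - C) * (s/(s-2*m))) 0 (Ici r₀) r := by
        intro r hr
        have h1 := hB' r hr
        have hval : L * a r * (r/(r-2*m)) = 0 := by rw [hL0]; ring
        rwa [hval] at h1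
      have hDz : ∀ r ∈ Ici r₀, HasDerivWithinAt
          (fun s => (s*(s-2*m)*A' s - 2*m*a s + C) * ((s-2*m)/s)) 0 (Ici r₀) r := by
        intro r hr
        have h1 := hD' r hr
        have hval : L * a r * ((r-2*m)/r) = 0 := by rw [hL0]; ring
        rwa [hval] at h1
      have hBconst := const_of_hasDerivWithinAt_zero hBz
      have hDconst := const_of_hasDerivWithinAt_zero hDz
      have hB0 : (r₀*(r₀-2*m)*A' r₀ + 2*m*a r₀ - C) * (r₀/(r₀-2*m)) = r₀ * a r₀ := by
        rw [hb0, hC]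
        field_simp
        ring
      have hD0 : (r₀*(r₀-2*m)*A' r₀ - 2*m*a r₀ + C) * ((r₀-2*m)/r₀)
          = -((r₀-2*m) * a r₀) + (r₀-2*m) * (L * a r₀) := by
        rw [hb0, hC]
        field_simp
        ring
      -- the explicit formula for 4*m*(a r)
      have haeq : ∀ r ∈ Ici r₀, 4*m*(a r)
          = r₀ * a r₀ * ((r-2*m)/r) + (r₀-2*m) * a r₀ * (r/(r-2*m)) + 2*C := by
        intro r hr
        have hr1 : 0 < r := lt_of_lt_of_le hr0 hr
        have hr2 : 0 < r - 2*m := by have : r₀ ≤ r := hr; linarith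
        have hne1 : r ≠ 0 := ne_of_gt hr1
        have hne2 : r - 2*m ≠ 0 := ne_of_gt hr2
        have hne3 : r₀ ≠ 0 := ne_of_gt hr0
        have hne4 : r₀ - 2*m ≠ 0 := ne_of_gt hrm
        have e1 : (r*(r-2*m)*A' r + 2*m*a r - C) * (r/(r-2*m)) = r₀ * a r₀ := by
          rw [hBconst r hr, hB0]
        have e2 : (r*(r-2*m)*A' r - 2*m*a r + C) * ((r-2*m)/r) = -((r₀-2*m) * a r₀) := by
          rw [hDconst r hr, hD0, hL0]
          ring
        field_simp at e1 e2 ⊢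
        linear_combination (r-2*m) * e1 - r * e2
      -- take the limit
      have t1 : Tendsto (fun r : ℝ => (r-2*m)/r) atTop (nhds 1) := by
        have h1 : Tendsto (fun r : ℝ => 1 - 2*m/r) atTop (nhds (1 - 0)) :=
          tendsto_const_nhds.sub (tendsto_const_nhds.div_atTop tendsto_id)
        rw [sub_zero] at h1
        refine h1.congr' ?_
        filter_upwards [eventually_gt_atTop 0] with r hr
        field_simp
      have t2 : Tendsto (fun r : ℝ => r/(r-2*m)) atTop (nhds 1) := by
        have h1 : Tendsto (fun r : ℝ => 1 + 2*m/(r-2*m)) atTop (nhds (1 + 0)) :=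
          tendsto_const_nhds.add (tendsto_const_nhds.div_atTop
            (tendsto_atTop_add_const_right _ (-(2*m)) tendsto_id))
        rw [add_zero] at h1
        refine h1.congr' ?_
        filter_upwards [eventually_gt_atTop (2*m)] with r hr
        have : r - 2*m ≠ 0 := by linarith
        field_simp
        ring
      have hT : Tendsto (fun r => 4*m*(a r)) atTop
          (nhds (r₀ * a r₀ * 1 + (r₀-2*m) * a r₀ * 1 + 2*C)) := by
        refine (((tendsto_const_nhds.mul t1).add (tendsto_const_nhds.mul t2)).add
          tendsto_const_nhds).congr' ?_
        filter_upwards [eventually_ge_atTop r₀] with r hr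
        exact (haeq r hr).symm
      have hT2 : Tendsto (fun r => 4*m*(a r)) atTop (nhds 0) := by
        have := hlima.const_mul (4*m)
        simpa using this
      have hval : r₀ * a r₀ * 1 + (r₀-2*m) * a r₀ * 1 + 2*C = 0 :=
        tendsto_nhds_unique hT hT2
      have ha0 : a r₀ = 0 := by
        rw [hC, hL0] at hval
        have h4m : (4:ℝ)*m ≠ 0 := by
          simp only [ne_eq, mul_eq_zero]
          push_neg
          exact ⟨by norm_num, hm0⟩
        have h5 : 4*m*(a r₀) = 0 := by linarith
        exact (mul_eq_zero.mp h5).resolve_left h4m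
      have hCz : C = 0 := by rw [hC, ha0]; ring
      intro r hr
      have h6 := haeq r hr
      rw [ha0, hCz] at h6
      have h7 : 4*m*(a r) = 0 := by rw [h6]; ring
      have h4m : (4:ℝ)*m ≠ 0 := by
        simp only [ne_eq, mul_eq_zero]
        push_neg
        exact ⟨by norm_num, hm0⟩
      exact (mul_eq_zero.mp h7).resolve_left h4m
  · -- case ℓ ≥ 1
    have hL : 2 ≤ L := by
      rw [hLval]
      have h2 : (1:ℝ) ≤ (ℓ:ℝ) := by exact_mod_cast h1
      nlinarith
    by_cases hpos : ∃ x ∈ Ici r₀, 0 < a x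
    · by_cases hneg : ∃ x ∈ Ici r₀, a x < 0
      · exfalso
        have hP := schw_max_principle m r₀ L C hr0 hm hL a A' hda hg hb0 hlima hpos
        have hN := schw_max_principle m r₀ L (-C) hr0 hm hL (fun r => -(a r)) (fun r => -(A' r))
          hda_neg hg_neg hb0_neg hlim_neg (by
            obtain ⟨x, hx, hax⟩ := hneg
            exact ⟨x, hx, by simpa using hax⟩)
        linarith
      · push_neg at hneg
        exact schw_nonneg_zero m r₀ L C hr0 hm hL a A' hda hg hb0 hC hlima hneg
    · push_neg at hpos
      have h2 := schw_nonneg_zero m r₀ L (-C) hr0 hm hL (fun r => -(a r)) (fun r => -(A' r))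
        hda_neg hg_neg hb0_neg hC_neg hlim_neg
        (fun r hr => by simpa using hpos r hr)
      intro r hr
      have h3 := h2 r hr
      simpa using h3
end

section
/- Let r₀ > 0 and let ℓ ≥ 0 be an integer. Suppose a : [r₀,∞) → ℝ is twice continuously differentiable and satisfies (d/dr)(r²·a'(r)) = ℓ(ℓ+1)·a(r) for all r ≥ r₀, together with the initial condition a'(r₀) = (ℓ(ℓ+1)/(2r₀))·a(r₀), and a(r) → 0 as r → ∞. Then a(r) = 0 for all r ≥ r₀. -/
open Set Filter

/-- The mass-zero case of the Schwarzschild radial ODE: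
`(r² a')' = ℓ(ℓ+1) a` on `[r₀, ∞)` with `a'(r₀) = (ℓ(ℓ+1)/(2r₀)) a(r₀)` and
`a(r) → 0` at infinity forces `a ≡ 0`. -/
theorem schwarzschild_radial_ode_mass_zero_decay_implies_zero
    (r₀ : ℝ) (hr₀ : 0 < r₀) (ℓ : ℕ)
    (a : ℝ → ℝ) (ha : ContDiffOn ℝ 2 a (Ici r₀))
    (hode : ∀ r ∈ Ici r₀,
      derivWithin (fun s => s ^ 2 * derivWithin a (Ici r₀) s) (Ici r₀) r
        = (ℓ : ℝ) * ((ℓ : ℝ) + 1) * a r)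
    (hinit : derivWithin a (Ici r₀) r₀
        = ((ℓ : ℝ) * ((ℓ : ℝ) + 1) / (2 * r₀)) * a r₀)
    (hlima : Tendsto a atTop (nhds 0)) :
    ∀ r ∈ Ici r₀, a r = 0 := by
  set lam : ℝ := (ℓ : ℝ) * ((ℓ : ℝ) + 1) with hlam
  have hlam0 : 0 ≤ lam := by positivity
  set a' : ℝ → ℝ := derivWithin a (Ici r₀) with ha'def
  have hUD : UniqueDiffOn ℝ (Ici r₀) := uniqueDiffOn_Ici r₀
  have haD : DifferentiableOn ℝ a (Ici r₀) := ha.differentiableOn (by norm_num)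
  have ha'C : ContDiffOn ℝ 1 a' (Ici r₀) := ha.derivWithin hUD (by norm_num)
  have ha'D : DifferentiableOn ℝ a' (Ici r₀) := ha'C.differentiableOn (by norm_num)
  set g : ℝ → ℝ := fun s => s ^ 2 * a' s with hgdef
  have hgD : DifferentiableOn ℝ g (Ici r₀) :=
    ((differentiableOn_id.pow 2)).mul ha'D
  set E : ℝ → ℝ := fun r => g r * a r with hEdef
  -- true derivative of `a` at interior points
  have haAt : ∀ x ∈ Ioi r₀, HasDerivAt a (a' x) x := fun x hx =>
    ((haD x (mem_Ici.mpr (le_of_lt hx))).hasDerivWithinAt).hasDerivAt (Ici_mem_nhds hx)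
  -- derivative of the energy function
  have hE' : ∀ r ∈ Ici r₀,
      HasDerivWithinAt E (lam * a r ^ 2 + r ^ 2 * a' r ^ 2) (Ici r₀) r := by
    intro r hr
    have h1 : HasDerivWithinAt g (lam * a r) (Ici r₀) r := by
      have h := (hgD r hr).hasDerivWithinAt
      rwa [show derivWithin g (Ici r₀) r = lam * a r from hode r hr] at h
    have h2 : HasDerivWithinAt a (a' r) (Ici r₀) r := (haD r hr).hasDerivWithinAt
    have h3 : HasDerivWithinAt (fun y => g y * a y) (lam * a r * a r + g r * a' r) (Ici r₀) r :=
      h1.mul h2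
    convert h3 using 1
    simp only [hgdef]
    ring
  have hEcont : ContinuousOn E (Ici r₀) := (hgD.mul haD).continuousOn
  have hEAt : ∀ x ∈ Ioi r₀, HasDerivAt E (lam * a x ^ 2 + x ^ 2 * a' x ^ 2) x := by
    intro x hx
    exact (hE' x (mem_Ici.mpr (le_of_lt hx))).hasDerivAt (Ici_mem_nhds hx)
  have hEmono : MonotoneOn E (Ici r₀) := by
    apply monotoneOn_of_deriv_nonneg (convex_Ici r₀) hEcont
    · intro x hx
      rw [interior_Ici] at hx
      exact ((hEAt x hx).differentiableAt).differentiableWithinAt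
    · intro x hx
      rw [interior_Ici] at hx
      rw [(hEAt x hx).deriv]
      positivity
  -- decay at infinity forces `E ≤ 0` everywhere
  have hEle : ∀ R ∈ Ici r₀, E R ≤ 0 := by
    intro R hR
    by_contra hc
    push_neg at hc
    set c : ℝ := E R with hcdef
    have hRpos : 0 < R := lt_of_lt_of_le hr₀ hR
    set F : ℝ → ℝ := fun r => a r ^ 2 + 2 * c / r with hFdef
    have hFAt : ∀ x ∈ Ioi R, HasDerivAt F (2 * (E x - c) / x ^ 2) x := by
      intro x hx
      have hxr : x ∈ Ioi r₀ := mem_Ioi.mpr (lt_of_le_of_lt hR hx)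
      have hx0 : x ≠ 0 := (lt_trans hr₀ hxr).ne'
      have h1 : HasDerivAt (fun r => a r ^ 2) (2 * a x ^ 1 * a' x) x :=
        (haAt x hxr).pow 2
      have h2 : HasDerivAt (fun r : ℝ => 2 * c / r) (2 * c * (-(x ^ 2)⁻¹)) x := by
        simpa [div_eq_mul_inv] using (hasDerivAt_inv hx0).const_mul (2 * c)
      have h3 : HasDerivAt (fun r => a r ^ 2 + 2 * c / r) (2 * a x ^ 1 * a' x + 2 * c * (-(x ^ 2)⁻¹)) x :=
        h1.add h2
      convert h3 using 1
      have hEx : E x = x ^ 2 * a' x * a x := by simp [hEdef, hgdef]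
      field_simp [hEx]
      ring
    have hFcont : ContinuousOn F (Ici R) := by
      apply ContinuousOn.add
      · exact ((haD.continuousOn.mono (Ici_subset_Ici.mpr hR)).pow 2)
      · exact ContinuousOn.div continuousOn_const continuousOn_id
          (fun x hx => (lt_of_lt_of_le hRpos hx).ne')
    have hFmono : MonotoneOn F (Ici R) := by
      apply monotoneOn_of_deriv_nonneg (convex_Ici R) hFcont
      · intro x hx
        rw [interior_Ici] at hx
        exact ((hFAt x hx).differentiableAt).differentiableWithinAt
      · intro x hx
        rw [interior_Ici] at hx
        rw [(hFAt x hx).deriv]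
        have hEc : c ≤ E x := hEmono hR (mem_Ici.mpr (le_trans hR (le_of_lt hx))) (le_of_lt hx)
        have hxpos : (0:ℝ) < x := lt_trans hRpos hx
        have hx2 : (0:ℝ) < x ^ 2 := by positivity
        apply div_nonneg _ (le_of_lt hx2)
        linarith
    have hFlim : Tendsto F atTop (nhds 0) := by
      have h1 : Tendsto (fun r => a r ^ 2) atTop (nhds 0) := by
        simpa using (hlima.pow 2)
      have h2 : Tendsto (fun r : ℝ => 2 * c / r) atTop (nhds 0) :=
        tendsto_const_nhds.div_atTop tendsto_id
      simpa using h1.add h2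
    have hFR : F R ≤ 0 := by
      apply ge_of_tendsto hFlim
      filter_upwards [eventually_ge_atTop R] with r hr
      exact hFmono (self_mem_Ici) hr hr
    have : 0 < F R := by
      have : 0 < 2 * c / R := div_pos (by linarith) hRpos
      simp only [hFdef]
      nlinarith [sq_nonneg (a R)]
    linarith
  -- the initial condition forces `E r₀ ≥ 0`, hence `E ≡ 0`
  have hE0 : ∀ r ∈ Ici r₀, E r = 0 := by
    have hEr₀ : 0 ≤ E r₀ := by
      have : E r₀ = lam * r₀ / 2 * a r₀ ^ 2 := by
        simp only [hEdef, hgdef]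
        rw [hinit]
        field_simp
      rw [this]
      positivity
    intro r hr
    have h1 : E r₀ ≤ E r := hEmono self_mem_Ici hr hr
    have h2 : E r ≤ 0 := hEle r hr
    linarith
  -- `E ≡ 0` forces `a' ≡ 0`
  have ha'0 : ∀ r ∈ Ici r₀, a' r = 0 := by
    intro r hr
    have h1 : derivWithin E (Ici r₀) r = lam * a r ^ 2 + r ^ 2 * a' r ^ 2 :=
      (hE' r hr).derivWithin (hUD r hr)
    have h2 : derivWithin E (Ici r₀) r = 0 := by
      rw [derivWithin_congr hE0 (hE0 r hr)]
      exact (hasDerivWithinAt_const r (Ici r₀) (0:ℝ)).derivWithin (uniqueDiffOn_Ici r₀ r hr)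
    rw [h2] at h1
    have hrpos : (0:ℝ) < r := lt_of_lt_of_le hr₀ hr
    have hr2 : (0:ℝ) < r ^ 2 := by positivity
    have hterm1 : 0 ≤ lam * a r ^ 2 := by positivity
    have hterm2 : 0 ≤ r ^ 2 * a' r ^ 2 := by positivity
    have : a' r ^ 2 = 0 := by nlinarith
    exact pow_eq_zero_iff (n := 2) (by norm_num) |>.mp this
  -- `a` is constant on `Ici r₀`
  have hconst : ∀ r ∈ Ici r₀, a r = a r₀ := by
    intro r hr
    apply (convex_Ici r₀).is_const_of_fderivWithin_eq_zero haD _ hr self_mem_Ici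
    intro x hx
    apply ContinuousLinearMap.ext_ring
    have h1 : fderivWithin ℝ a (Ici r₀) x 1 = derivWithin a (Ici r₀) x := rfl
    rw [ContinuousLinearMap.zero_apply, h1]
    exact ha'0 x hx
  -- the decay then gives `a r₀ = 0`
  have har₀ : a r₀ = 0 := by
    have h1 : Tendsto a atTop (nhds (a r₀)) := by
      apply Tendsto.congr' _ tendsto_const_nhds
      filter_upwards [eventually_ge_atTop r₀] with r hr
      exact (hconst r hr).symm
    exact (tendsto_nhds_unique h1 hlima)
  intro r hr
  rw [hconst r hr, har₀]
end

section
/- Let r₀ ≥ 0 and let h, p : [r₀,∞) → ℝ be continuous and strictly positive. Let B : [r₀,∞) → ℝ be differentiable, with r ↦ h(r)·B'(r) differentiable and (d/dr)(h(r)·B'(r)) = p(r)·B(r) for all r ≥ r₀. If B(r₀) ≥ 0 and B'(r₀) ≥ 0 with not both B(r₀) and B'(r₀) equal to zero, then B(r) > 0 and B'(r) > 0 for all r > r₀. -/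
open Set Filter Topology Metric

/-- Sturm–Liouville comparison: if `(h B')' = p B` on `[r₀, ∞)` with `h, p`
continuous and positive, and `B(r₀) ≥ 0`, `B'(r₀) ≥ 0` not both zero, then `B > 0` and
`B' > 0` on `(r₀, ∞)`. -/
theorem sturm_liouville_positivity
    (r₀ : ℝ) (hr₀ : 0 ≤ r₀) (h p : ℝ → ℝ)
    (hh_cont : ContinuousOn h (Ici r₀)) (hh_pos : ∀ r ∈ Ici r₀, 0 < h r)
    (hp_cont : ContinuousOn p (Ici r₀)) (hp_pos : ∀ r ∈ Ici r₀, 0 < p r)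
    (B : ℝ → ℝ) (hB : DifferentiableOn ℝ B (Ici r₀))
    (hhB' : DifferentiableOn ℝ (fun r => h r * derivWithin B (Ici r₀) r) (Ici r₀))
    (hode : ∀ r ∈ Ici r₀,
      derivWithin (fun s => h s * derivWithin B (Ici r₀) s) (Ici r₀) r = p r * B r)
    (hB0 : 0 ≤ B r₀) (hB'0 : 0 ≤ derivWithin B (Ici r₀) r₀)
    (hnot : ¬ (B r₀ = 0 ∧ derivWithin B (Ici r₀) r₀ = 0)) :
    ∀ r, r₀ < r → 0 < B r ∧ 0 < derivWithin B (Ici r₀) r := by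
  set B' : ℝ → ℝ := derivWithin B (Ici r₀) with hB'def
  set G : ℝ → ℝ := fun r => h r * B' r with hGdef
  have hh_pos' : ∀ r, r₀ ≤ r → 0 < h r := fun r hr => hh_pos r (mem_Ici.mpr hr)
  have hp_pos' : ∀ r, r₀ ≤ r → 0 < p r := fun r hr => hp_pos r (mem_Ici.mpr hr)
  have hode' : ∀ r, r₀ ≤ r → derivWithin G (Ici r₀) r = p r * B r :=
    fun r hr => hode r (mem_Ici.mpr hr)
  have hGcont : ContinuousOn G (Ici r₀) := hhB'.continuousOn
  have hBcont : ContinuousOn B (Ici r₀) := hB.continuousOn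
  have hGr₀nonneg : 0 ≤ G r₀ := mul_nonneg (hh_pos' r₀ le_rfl).le hB'0
  -- deriv formulas at interior points
  have hdB : ∀ x, r₀ < x → deriv B x = G x / h x := by
    intro x hx
    rw [← derivWithin_of_mem_nhds (Ici_mem_nhds hx)]
    rw [eq_div_iff (hh_pos' x hx.le).ne']
    exact mul_comm (B' x) (h x)
  have hdG : ∀ x, r₀ < x → deriv G x = p x * B x := by
    intro x hx
    rw [← derivWithin_of_mem_nhds (f := G) (Ici_mem_nhds hx)]
    exact hode' x hx.le
  -- key propagation lemma
  have key : ∀ c, r₀ < c → (∀ s ∈ Icc r₀ c, 0 ≤ B s ∧ 0 ≤ G s) →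
      0 < B c ∧ 0 < G c := by
    intro c hc hgood
    have hsub : Icc r₀ c ⊆ Ici r₀ := Icc_subset_Ici_self
    have hint : interior (Icc r₀ c) = Ioo r₀ c := interior_Icc
    have hsub' : Ioo r₀ c ⊆ Ici r₀ := fun x hx => hx.1.le
    have hmonoB : MonotoneOn B (Icc r₀ c) := by
      apply monotoneOn_of_deriv_nonneg (convex_Icc _ _) (hBcont.mono hsub)
      · rw [hint]; exact hB.mono hsub'
      · intro x hx
        rw [hint] at hx
        rw [hdB x hx.1]
        exact div_nonneg (hgood x ⟨hx.1.le, hx.2.le⟩).2 (hh_pos' x hx.1.le).le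
    have hmonoG : MonotoneOn G (Icc r₀ c) := by
      apply monotoneOn_of_deriv_nonneg (convex_Icc _ _) (hGcont.mono hsub)
      · rw [hint]; exact hhB'.mono hsub'
      · intro x hx
        rw [hint] at hx
        rw [hdG x hx.1]
        exact mul_nonneg (hp_pos' x hx.1.le).le (hgood x ⟨hx.1.le, hx.2.le⟩).1
    have hmemr₀ : r₀ ∈ Icc r₀ c := left_mem_Icc.mpr hc.le
    have hmemc : c ∈ Icc r₀ c := right_mem_Icc.mpr hc.le
    rcases hB0.lt_or_eq with hBpos | hBeq
    · have hBc : 0 < B c := lt_of_lt_of_le hBpos (hmonoB hmemr₀ hmemc hc.le)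
      have hstrictG : StrictMonoOn G (Icc r₀ c) := by
        apply strictMonoOn_of_deriv_pos (convex_Icc _ _) (hGcont.mono hsub)
        intro x hx
        rw [hint] at hx
        rw [hdG x hx.1]
        exact mul_pos (hp_pos' x hx.1.le)
          (lt_of_lt_of_le hBpos (hmonoB hmemr₀ ⟨hx.1.le, hx.2.le⟩ hx.1.le))
      exact ⟨hBc, lt_of_le_of_lt hGr₀nonneg (hstrictG hmemr₀ hmemc hc)⟩
    · have hB'ne : B' r₀ ≠ 0 := fun heq => hnot ⟨hBeq.symm, heq⟩
      have hB'pos : 0 < B' r₀ := hB'0.lt_of_ne (Ne.symm hB'ne)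
      have hGr₀ : 0 < G r₀ := mul_pos (hh_pos' r₀ le_rfl) hB'pos
      have hGc : 0 < G c := lt_of_lt_of_le hGr₀ (hmonoG hmemr₀ hmemc hc.le)
      have hstrictB : StrictMonoOn B (Icc r₀ c) := by
        apply strictMonoOn_of_deriv_pos (convex_Icc _ _) (hBcont.mono hsub)
        intro x hx
        rw [hint] at hx
        rw [hdB x hx.1]
        exact div_pos (lt_of_lt_of_le hGr₀ (hmonoG hmemr₀ ⟨hx.1.le, hx.2.le⟩ hx.1.le))
          (hh_pos' x hx.1.le)
      refine ⟨?_, hGc⟩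
      have := hstrictB hmemr₀ hmemc hc
      rw [← hBeq] at this
      exact this
  -- local positivity near r₀
  have hloc : ∃ u, r₀ < u ∧ ∀ s ∈ Icc r₀ u, 0 ≤ B s ∧ 0 ≤ G s := by
    rcases hB0.lt_or_eq with hBpos | hBeq
    · have hev : ∀ᶠ s in 𝓝[Ici r₀] r₀, 0 < B s :=
        (hBcont r₀ self_mem_Ici).eventually (eventually_gt_nhds hBpos)
      rcases mem_nhdsGE_iff_exists_Icc_subset.mp hev with ⟨u, hu, hsubu⟩
      refine ⟨u, hu, ?_⟩
      have hsub : Icc r₀ u ⊆ Ici r₀ := Icc_subset_Ici_self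
      have hmonoG : MonotoneOn G (Icc r₀ u) := by
        apply monotoneOn_of_deriv_nonneg (convex_Icc _ _) (hGcont.mono hsub)
        · rw [interior_Icc]; exact hhB'.mono fun x hx => hx.1.le
        · intro x hx
          rw [interior_Icc] at hx
          rw [hdG x hx.1]
          exact mul_nonneg (hp_pos' x hx.1.le).le (hsubu ⟨hx.1.le, hx.2.le⟩).le
      intro s hs
      exact ⟨(hsubu hs).le,
        le_trans hGr₀nonneg (hmonoG (left_mem_Icc.mpr hu.le) hs hs.1)⟩
    · have hB'ne : B' r₀ ≠ 0 := fun heq => hnot ⟨hBeq.symm, heq⟩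
      have hB'pos : 0 < B' r₀ := hB'0.lt_of_ne (Ne.symm hB'ne)
      have hGr₀ : 0 < G r₀ := mul_pos (hh_pos' r₀ le_rfl) hB'pos
      have hev : ∀ᶠ s in 𝓝[Ici r₀] r₀, 0 < G s :=
        (hGcont r₀ self_mem_Ici).eventually (eventually_gt_nhds hGr₀)
      rcases mem_nhdsGE_iff_exists_Icc_subset.mp hev with ⟨u, hu, hsubu⟩
      refine ⟨u, hu, ?_⟩
      have hsub : Icc r₀ u ⊆ Ici r₀ := Icc_subset_Ici_self
      have hmonoB : MonotoneOn B (Icc r₀ u) := by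
        apply monotoneOn_of_deriv_nonneg (convex_Icc _ _) (hBcont.mono hsub)
        · rw [interior_Icc]; exact hB.mono fun x hx => hx.1.le
        · intro x hx
          rw [interior_Icc] at hx
          rw [hdB x hx.1]
          exact div_nonneg (hsubu ⟨hx.1.le, hx.2.le⟩).le (hh_pos' x hx.1.le).le
      intro s hs
      exact ⟨le_trans hB0 (hmonoB (left_mem_Icc.mpr hu.le) hs hs.1), (hsubu hs).le⟩
  -- the bad set is empty
  have good : ∀ r ∈ Ici r₀, 0 ≤ B r ∧ 0 ≤ G r := by
    set A : Set ℝ := {r | r₀ ≤ r ∧ (B r < 0 ∨ G r < 0)} with hAdef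
    have hmain : A = ∅ := by
      by_contra hA
      have hAne : A.Nonempty := nonempty_iff_ne_empty.mpr hA
      have hAbdd : BddBelow A := ⟨r₀, fun a ha => ha.1⟩
      set c := sInf A with hcdef
      obtain ⟨u, hu, hloc'⟩ := hloc
      have hcu : u ≤ c := by
        apply le_csInf hAne
        intro a ha
        by_contra hau
        push_neg at hau
        have hgd := hloc' a ⟨ha.1, hau.le⟩
        rcases ha.2 with h1 | h1 <;> linarith [hgd.1, hgd.2]
      have hc : r₀ < c := lt_of_lt_of_le hu hcu
      have hgoodIco : ∀ s ∈ Ico r₀ c, 0 ≤ B s ∧ 0 ≤ G s := by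
        intro s hs
        by_contra hbad
        rw [not_and_or, not_le, not_le] at hbad
        have : c ≤ s := csInf_le hAbdd ⟨hs.1, hbad⟩
        linarith [hs.2]
      haveI : (𝓝[Ico r₀ c] c).NeBot := by
        rw [← mem_closure_iff_nhdsWithin_neBot, closure_Ico hc.ne]
        exact right_mem_Icc.mpr hc.le
      have hmono : 𝓝[Ico r₀ c] c ≤ 𝓝[Ici r₀] c :=
        nhdsWithin_mono c fun x hx => hx.1
      have hBc0 : 0 ≤ B c :=
        ge_of_tendsto ((hBcont c (mem_Ici.mpr hc.le)).mono_left hmono)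
          (eventually_mem_nhdsWithin.mono fun s hs => (hgoodIco s hs).1)
      have hGc0 : 0 ≤ G c :=
        ge_of_tendsto ((hGcont c (mem_Ici.mpr hc.le)).mono_left hmono)
          (eventually_mem_nhdsWithin.mono fun s hs => (hgoodIco s hs).2)
      have hgoodIcc : ∀ s ∈ Icc r₀ c, 0 ≤ B s ∧ 0 ≤ G s := by
        intro s hs
        rcases hs.2.lt_or_eq with hlt | rfl'
        · exact hgoodIco s ⟨hs.1, hlt⟩
        · rw [rfl']; exact ⟨hBc0, hGc0⟩
      obtain ⟨hBc, hGc⟩ := key c hc hgoodIcc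
      have hev : ∀ᶠ s in 𝓝[Ici r₀] c, 0 < B s ∧ 0 < G s :=
        ((hBcont c (mem_Ici.mpr hc.le)).eventually (eventually_gt_nhds hBc)).and
          ((hGcont c (mem_Ici.mpr hc.le)).eventually (eventually_gt_nhds hGc))
      rcases Metric.mem_nhdsWithin_iff.mp hev with ⟨ε, hε, hball⟩
      obtain ⟨a, haA, halt⟩ := Real.lt_sInf_add_pos hAne hε
      have hca : c ≤ a := csInf_le hAbdd haA
      have haball : a ∈ Metric.ball c ε ∩ Ici r₀ := by
        constructor
        · rw [Metric.mem_ball, Real.dist_eq, abs_of_nonneg (by linarith)]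
          linarith
        · exact haA.1
      have := hball haball
      rcases haA.2 with h1 | h1 <;> linarith [this.1, this.2]
    intro r hr
    have hrA : r ∉ A := by rw [hmain]; exact notMem_empty r
    rw [hAdef] at hrA
    simp only [mem_setOf_eq, not_and_or, not_or, not_lt] at hrA
    rcases hrA with h1 | h1
    · exact absurd hr h1
    · exact h1
  -- conclusion
  intro r hr
  have hgood : ∀ s ∈ Icc r₀ r, 0 ≤ B s ∧ 0 ≤ G s := fun s hs => good s hs.1
  obtain ⟨hBr, hGr⟩ := key r hr hgood
  refine ⟨hBr, ?_⟩
  have hGr' : 0 < h r * B' r := hGr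
  nlinarith [hh_pos' r hr.le]
end

section
/- Let c < r₀ with r₀ > 0, and let p : [r₀,∞) → ℝ be continuous, strictly positive, and converging to a strictly positive constant as r → ∞. Let B : [r₀,∞) → ℝ be differentiable, with r ↦ r(r−c)·B'(r) differentiable and (d/dr)(r(r−c)·B'(r)) = p(r)·B(r) for all r ≥ r₀. If B(r) > 0 for all r ≥ r₀ and B is monotone increasing on [r₀,∞), then B(r) → +∞ as r → ∞. -/
open Set Filter

/-- For the ODE `(r(r−c) B')' = p B` on `[r₀, ∞)` with `c < r₀`, `r₀ > 0`,
`p` continuous positive converging to a positive constant, a positive increasing solution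
`B` tends to `+∞`. -/
theorem sturm_liouville_increasing_diverges
    (c r₀ : ℝ) (hc : c < r₀) (hr₀ : 0 < r₀) (p : ℝ → ℝ)
    (hp_cont : ContinuousOn p (Ici r₀)) (hp_pos : ∀ r ∈ Ici r₀, 0 < p r)
    (L : ℝ) (hL : 0 < L) (hp_lim : Tendsto p atTop (nhds L))
    (B : ℝ → ℝ) (hB : DifferentiableOn ℝ B (Ici r₀))
    (hhB' : DifferentiableOn ℝ
      (fun r => r * (r - c) * derivWithin B (Ici r₀) r) (Ici r₀))
    (hode : ∀ r ∈ Ici r₀,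
      derivWithin (fun s => s * (s - c) * derivWithin B (Ici r₀) s) (Ici r₀) r
        = p r * B r)
    (hBpos : ∀ r ∈ Ici r₀, 0 < B r)
    (hmono : MonotoneOn B (Ici r₀)) :
    Tendsto B atTop atTop := by
  set B' : ℝ → ℝ := fun r => derivWithin B (Ici r₀) r with hB'def
  set w : ℝ → ℝ := fun r => r * (r - c) * B' r with hwdef
  -- derivative facts at interior points
  have hwderiv : ∀ r, r₀ < r → HasDerivAt w (p r * B r) r := by
    intro r hr
    have h1 := ((hhB' r (le_of_lt hr)).hasDerivWithinAt).hasDerivAt (Ici_mem_nhds hr)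
    rwa [hode r (le_of_lt hr)] at h1
  have hBderiv : ∀ r, r₀ < r → HasDerivAt B (B' r) r := by
    intro r hr
    exact ((hB r (le_of_lt hr)).hasDerivWithinAt).hasDerivAt (Ici_mem_nhds hr)
  -- eventually p r > L/2
  obtain ⟨R, hR⟩ := (eventually_atTop.mp (hp_lim.eventually (eventually_gt_nhds (half_lt_self hL))))
  set R₂ : ℝ := max R (r₀ + 1) with hR₂def
  have hR₂r₀ : r₀ < R₂ := lt_of_lt_of_le (by linarith) (le_max_right _ _)
  set δ : ℝ := L / 2 * B r₀ with hδdef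
  have hδpos : 0 < δ := mul_pos (half_pos hL) (hBpos r₀ self_mem_Ici)
  -- w r - δ r is monotone on Ici R₂
  have hgmono : MonotoneOn (fun r => w r - δ * r) (Ici R₂) := by
    apply monotoneOn_of_deriv_nonneg (convex_Ici R₂)
    · apply ContinuousOn.sub
      · exact (hhB'.continuousOn).mono (fun x hx => le_trans hR₂r₀.le hx)
      · exact (continuous_const.mul continuous_id).continuousOn
    · intro r hr
      rw [interior_Ici] at hr
      have hr' : r₀ < r := lt_trans hR₂r₀ hr
      exact (((hwderiv r hr').sub ((hasDerivAt_id r).const_mul δ)).differentiableAt).differentiableWithinAt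
    · intro r hr
      rw [interior_Ici] at hr
      have hr' : r₀ < r := lt_trans hR₂r₀ hr
      have hd := ((hwderiv r hr').sub ((hasDerivAt_id r).const_mul δ)).deriv
      simp only [id_eq, mul_one] at hd
      rw [show (fun r => w r - δ * r) = (w - fun y => δ * y) from rfl, hd]
      have hpr : L / 2 < p r := hR r (le_trans (le_max_left _ _) hr.le)
      have hBr : B r₀ ≤ B r := hmono (le_refl r₀) (le_of_lt (lt_trans hR₂r₀ hr)) (le_of_lt (lt_trans hR₂r₀ hr))
      have hB0 : 0 < B r₀ := hBpos r₀ self_mem_Ici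
      have : δ ≤ p r * B r := by
        calc δ = L / 2 * B r₀ := rfl
        _ ≤ p r * B r := mul_le_mul hpr.le hBr hB0.le (by linarith)
      linarith
  have hwlb : ∀ r, R₂ ≤ r → w R₂ + δ * (r - R₂) ≤ w r := by
    intro r hr
    have := hgmono (self_mem_Ici) hr hr
    simp only at this
    linarith
  -- choose R₃ with w r ≥ (δ/2) * r for r ≥ R₃
  set R₃ : ℝ := max R₂ (2 * (δ * R₂ - w R₂) / δ) with hR₃def
  have hR₃R₂ : R₂ ≤ R₃ := le_max_left _ _
  have hR₃r₀ : r₀ < R₃ := lt_of_lt_of_le hR₂r₀ hR₃R₂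
  have hwhalf : ∀ r, R₃ ≤ r → δ / 2 * r ≤ w r := by
    intro r hr
    have h1 := hwlb r (le_trans hR₃R₂ hr)
    have h2 : 2 * (δ * R₂ - w R₂) / δ ≤ r := le_trans (le_max_right _ _) hr
    rw [div_le_iff₀ hδpos] at h2
    nlinarith
  -- B' lower bound
  have hB'lb : ∀ r, R₃ ≤ r → δ / 2 / (r - c) ≤ B' r := by
    intro r hr
    have hr' : r₀ < r := lt_of_lt_of_le hR₃r₀ hr
    have hrpos : 0 < r := lt_trans hr₀ hr'
    have hrc : 0 < r - c := by linarith
    have hw := hwhalf r hr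
    rw [div_le_iff₀ hrc]
    have : w r = r * (r - c) * B' r := rfl
    nlinarith
  -- φ r = B r - (δ/2) * log (r - c) monotone on Ici R₃
  have hφmono : MonotoneOn (fun r => B r - δ / 2 * Real.log (r - c)) (Ici R₃) := by
    apply monotoneOn_of_deriv_nonneg (convex_Ici R₃)
    · apply ContinuousOn.sub
      · exact (hB.continuousOn).mono (fun x hx => le_trans hR₃r₀.le hx)
      · apply ContinuousOn.mul continuousOn_const
        apply ContinuousOn.log
        · exact (continuous_id.sub continuous_const).continuousOn
        · intro x hx
          have : r₀ ≤ x := le_trans hR₃r₀.le hx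
          have : c < x := lt_of_lt_of_le hc this
          exact ne_of_gt (by linarith)
    · intro r hr
      rw [interior_Ici] at hr
      have hr' : r₀ < r := lt_trans hR₃r₀ hr
      have hrc : r - c ≠ 0 := ne_of_gt (by linarith [lt_trans hc hr'])
      have hlog : HasDerivAt (fun s => Real.log (s - c)) (1 / (r - c)) r := by
        have := (((hasDerivAt_id r).sub_const c).log hrc)
        simpa using this
      exact ((hBderiv r hr').sub (hlog.const_mul (δ / 2))).differentiableAt.differentiableWithinAt
    · intro r hr
      rw [interior_Ici] at hr
      have hr' : r₀ < r := lt_trans hR₃r₀ hr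
      have hrc0 : 0 < r - c := by linarith [lt_trans hc hr']
      have hrc : r - c ≠ 0 := ne_of_gt hrc0
      have hlog : HasDerivAt (fun s => Real.log (s - c)) (1 / (r - c)) r := by
        have := (((hasDerivAt_id r).sub_const c).log hrc)
        simpa using this
      have hd := ((hBderiv r hr').sub (hlog.const_mul (δ / 2))).deriv
      rw [show (fun r => B r - δ / 2 * Real.log (r - c)) = (B - fun y => δ / 2 * Real.log (y - c)) from rfl, hd]
      have h2 := hB'lb r hr.le
      rw [div_le_iff₀ hrc0] at h2
      rw [sub_nonneg, mul_one_div, div_le_iff₀ hrc0]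
      exact h2
  -- conclude
  have hlb : ∀ r, R₃ ≤ r →
      B R₃ - δ / 2 * Real.log (R₃ - c) + δ / 2 * Real.log (r - c) ≤ B r := by
    intro r hr
    have := hφmono self_mem_Ici hr hr
    simp only at this
    linarith
  apply tendsto_atTop_mono' atTop
    (Eventually.mono (eventually_ge_atTop R₃) (fun r hr => hlb r hr))
  apply tendsto_atTop_add_const_left
  apply Tendsto.const_mul_atTop (by positivity : (0:ℝ) < δ / 2)
  exact Real.tendsto_log_atTop.comp (tendsto_atTop_add_const_right _ (-c) tendsto_id)
end

section
/- Let c < r₀ with r₀ > 0, and let p : [r₀,∞) → ℝ be continuous, strictly positive, and converging to a strictly positive constant as r → ∞. Let B : [r₀,∞) → ℝ be differentiable, with r ↦ r(r−c)·B'(r) differentiable and (d/dr)(r(r−c)·B'(r)) = p(r)·B(r) for all r ≥ r₀. If B(r) > 0 for all r ≥ r₀ and B is monotone decreasing on [r₀,∞), then B(r) → 0 as r → ∞. -/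
open Set Filter

/-- For the ODE `(r(r−c) B')' = p B` on `[r₀, ∞)` with `c < r₀`, `r₀ > 0`,
`p` continuous positive converging to a positive constant, a positive decreasing solution
`B` tends to `0`. -/
theorem sturm_liouville_decreasing_tendsto_zero
    (c r₀ : ℝ) (hc : c < r₀) (hr₀ : 0 < r₀) (p : ℝ → ℝ)
    (hp_cont : ContinuousOn p (Ici r₀)) (hp_pos : ∀ r ∈ Ici r₀, 0 < p r)
    (L : ℝ) (hL : 0 < L) (hp_lim : Tendsto p atTop (nhds L))
    (B : ℝ → ℝ) (hB : DifferentiableOn ℝ B (Ici r₀))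
    (hhB' : DifferentiableOn ℝ
      (fun r => r * (r - c) * derivWithin B (Ici r₀) r) (Ici r₀))
    (hode : ∀ r ∈ Ici r₀,
      derivWithin (fun s => s * (s - c) * derivWithin B (Ici r₀) s) (Ici r₀) r
        = p r * B r)
    (hBpos : ∀ r ∈ Ici r₀, 0 < B r)
    (hanti : AntitoneOn B (Ici r₀)) :
    Tendsto B atTop (nhds 0) := by
  set g : ℝ → ℝ := fun r => r * (r - c) * derivWithin B (Ici r₀) r with hgdef
  -- the factor r(r-c) is positive on [r₀,∞)
  have hfac : ∀ r : ℝ, r₀ ≤ r → 0 < r * (r - c) := fun r hr =>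
    mul_pos (lt_of_lt_of_le hr₀ hr) (by linarith)
  -- derivative of B within Ici r₀ is nonpositive
  have hB'le : ∀ x ∈ Ici r₀, derivWithin B (Ici r₀) x ≤ 0 := by
    intro x hx
    have hd : HasDerivWithinAt B (derivWithin B (Ici r₀) x) (Ici r₀) x :=
      (hB x hx).hasDerivWithinAt
    have ht := hasDerivWithinAt_iff_tendsto_slope.1 hd
    have hsub : Ioi x ⊆ Ici r₀ \ {x} := fun y hy =>
      ⟨mem_Ici.2 (le_trans (mem_Ici.1 hx) (le_of_lt (mem_Ioi.1 hy))), ne_of_gt hy⟩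
    have hne : (nhdsWithin x (Ici r₀ \ {x})).NeBot :=
      Filter.neBot_of_le (nhdsWithin_mono x hsub)
    refine le_of_tendsto ht ?_
    filter_upwards [self_mem_nhdsWithin] with y hy
    rcases hy with ⟨hy1, hy2⟩
    have hyne : y ≠ x := hy2
    rw [slope_def_field]
    rcases lt_or_gt_of_ne hyne with h | h
    · have hBle : B x ≤ B y := hanti hy1 hx (le_of_lt h)
      have : y - x < 0 := by linarith
      exact div_nonpos_of_nonneg_of_nonpos (by linarith) (le_of_lt this)
    · have hBle : B y ≤ B x := hanti hx hy1 (le_of_lt h)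
      exact div_nonpos_of_nonpos_of_nonneg (by linarith) (by linarith)
  -- hence g ≤ 0 on [r₀,∞)
  have hgle : ∀ x ∈ Ici r₀, g x ≤ 0 := fun x hx =>
    mul_nonpos_of_nonneg_of_nonpos (le_of_lt (hfac x hx)) (hB'le x hx)
  -- the limit m of B
  have hbdd : BddBelow (range fun r : ℝ => B (max r r₀)) := by
    refine ⟨0, ?_⟩
    rintro y ⟨r, rfl⟩
    exact le_of_lt (hBpos _ (le_max_right r r₀))
  have hBm_anti : Antitone fun r : ℝ => B (max r r₀) := fun a b hab =>
    hanti (le_max_right a r₀) (le_max_right b r₀) (max_le_max hab le_rfl)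
  set m : ℝ := ⨅ r : ℝ, B (max r r₀) with hmdef
  have htend : Tendsto (fun r : ℝ => B (max r r₀)) atTop (nhds m) :=
    tendsto_atTop_ciInf hBm_anti hbdd
  have htendB : Tendsto B atTop (nhds m) := by
    refine htend.congr' ?_
    filter_upwards [eventually_ge_atTop r₀] with r hr
    rw [max_eq_left hr]
  have hm0 : 0 ≤ m := by
    refine ge_of_tendsto htendB ?_
    filter_upwards [eventually_ge_atTop r₀] with r hr
    exact le_of_lt (hBpos r hr)
  have hmle : ∀ r ∈ Ici r₀, m ≤ B r := by
    intro r hr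
    have := ciInf_le hbdd r
    rwa [max_eq_left hr] at this
  suffices hm : m = 0 by rwa [hm] at htendB
  by_contra hne
  have hmpos : 0 < m := lt_of_le_of_ne hm0 (Ne.symm hne)
  -- eventually p r > L/2
  have hev : ∀ᶠ r in atTop, L / 2 < p r :=
    hp_lim.eventually (eventually_gt_nhds (by linarith))
  obtain ⟨R, hR⟩ := eventually_atTop.1 hev
  set R₁ : ℝ := max R (r₀ + 1) with hR₁def
  have hR₁r₀ : r₀ < R₁ := lt_of_lt_of_le (by linarith) (le_max_right _ _)
  have hR₁mem : R₁ ∈ Ici r₀ := le_of_lt hR₁r₀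
  set C : ℝ := L / 2 * m with hCdef
  have hCpos : 0 < C := mul_pos (by linarith) hmpos
  -- on the interior of Ici R₁ the derivative of g is ≥ C
  have hkey : ∀ x ∈ interior (Ici R₁), C ≤ deriv g x := by
    intro x hx
    rw [interior_Ici] at hx
    have hxr₀ : r₀ < x := lt_trans hR₁r₀ hx
    have hnb : Ici r₀ ∈ nhds x := Ici_mem_nhds hxr₀
    have h1 : deriv g x = derivWithin g (Ici r₀) x := (derivWithin_of_mem_nhds hnb).symm
    rw [h1, hode x (le_of_lt hxr₀)]
    have hpx : L / 2 ≤ p x :=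
      le_of_lt (hR x (le_trans (le_max_left _ _) (le_of_lt hx)))
    have hBx : m ≤ B x := hmle x (le_of_lt hxr₀)
    calc C = L / 2 * m := rfl
      _ ≤ p x * B x := mul_le_mul hpx hBx (le_of_lt hmpos) (le_trans (by linarith) hpx)
  have hcont : ContinuousOn g (Ici R₁) :=
    hhB'.continuousOn.mono (Ici_subset_Ici.2 (le_of_lt hR₁r₀))
  have hdiffint : DifferentiableOn ℝ g (interior (Ici R₁)) := by
    intro x hx
    rw [interior_Ici] at hx
    have hxr₀ : r₀ < x := lt_trans hR₁r₀ hx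
    exact ((hhB' x (le_of_lt hxr₀)).differentiableAt
      (Ici_mem_nhds hxr₀)).differentiableWithinAt
  have hslope := (convex_Ici R₁).mul_sub_le_image_sub_of_le_deriv hcont hdiffint hkey
  set b : ℝ := R₁ + (1 + |g R₁|) / C with hbdef
  have hbge : R₁ ≤ b := by
    have h0 : 0 < (1 + |g R₁|) / C := div_pos (by positivity) hCpos
    rw [hbdef]; linarith
  have h2 := hslope R₁ self_mem_Ici b hbge hbge
  have hCb : C * (b - R₁) = 1 + |g R₁| := by
    rw [hbdef]
    field_simp
    ring
  have habs : -|g R₁| ≤ g R₁ := neg_abs_le _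
  have hgb : g b ≤ 0 := hgle b (le_trans (le_of_lt hR₁r₀) hbge)
  rw [hCb] at h2
  linarith
end

section
/- Let m ∈ ℝ with m ≠ 0, m₀ := max{0, m}, r₀ > 2m₀, and a₀ ∈ ℝ. Suppose A : [r₀,∞) → ℝ is twice continuously differentiable and satisfies (d/dr)(r(r−2m)·A'(r)) = (4m²/(r(r−2m)))·A(r) for all r ≥ r₀, with initial values A(r₀) = (r₀/(2m) − 1/2)·a₀ and A'(r₀) = −(m/(r₀(r₀−2m)))·a₀. Then A(r) → (r₀/(2m) − 1/2)·a₀ as r → ∞. -/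
open Set Filter

/-- The `ℓ = 0` linearized radial equation
`(r(r−2m) A')' = (4m²/(r(r−2m))) A` with the stated initial values has
`A(r) → (r₀/(2m) − 1/2) a₀` as `r → ∞`. -/
theorem ell_zero_radial_ode_limit
    (m r₀ a₀ : ℝ) (hm : m ≠ 0) (hr₀ : 2 * max 0 m < r₀)
    (A : ℝ → ℝ) (hA : ContDiffOn ℝ 2 A (Ici r₀))
    (hode : ∀ r ∈ Ici r₀,
      derivWithin (fun s => s * (s - 2 * m) * derivWithin A (Ici r₀) s) (Ici r₀) r
        = (4 * m ^ 2 / (r * (r - 2 * m))) * A r)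
    (hA0 : A r₀ = (r₀ / (2 * m) - 1 / 2) * a₀)
    (hA'0 : derivWithin A (Ici r₀) r₀ = -(m / (r₀ * (r₀ - 2 * m))) * a₀) :
    Tendsto A atTop (nhds ((r₀ / (2 * m) - 1 / 2) * a₀)) := by
  set A' := derivWithin A (Ici r₀) with hA'def
  set W : ℝ → ℝ := fun s => s * (s - 2 * m) * A' s with hWdef
  -- positivity facts
  have hpos : ∀ r ∈ Ici r₀, 0 < r ∧ 0 < r - 2 * m := by
    intro r hr
    have h1 : (0:ℝ) ≤ 2 * max 0 m := by positivity
    have h2 : 2 * m ≤ 2 * max 0 m := by have := le_max_right 0 m; linarith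
    simp only [mem_Ici] at hr
    exact ⟨by linarith, by linarith⟩
  have hud : UniqueDiffOn ℝ (Ici r₀) := uniqueDiffOn_Ici r₀
  -- A is differentiable within, with derivative A'
  have hAd : ∀ r ∈ Ici r₀, HasDerivWithinAt A (A' r) (Ici r₀) r := by
    intro r hr
    exact ((hA.differentiableOn (by norm_num)) r hr).hasDerivWithinAt
  -- A' is differentiable on Ici r₀
  have hA'd : DifferentiableOn ℝ A' (Ici r₀) := by
    have : ContDiffOn ℝ 1 A' (Ici r₀) := hA.derivWithin hud (by norm_num)
    exact this.differentiableOn (by norm_num)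
  -- W has derivative (4m²/(r(r-2m))) A r within Ici r₀
  have hWd : ∀ r ∈ Ici r₀, HasDerivWithinAt W ((4 * m ^ 2 / (r * (r - 2 * m))) * A r)
      (Ici r₀) r := by
    intro r hr
    have hWdiff : DifferentiableWithinAt ℝ W (Ici r₀) r := by
      exact ((differentiableWithinAt_id.mul
        (differentiableWithinAt_id.sub (differentiableWithinAt_const _))).mul (hA'd r hr))
    have := hWdiff.hasDerivWithinAt
    rwa [show derivWithin W (Ici r₀) r = (4 * m ^ 2 / (r * (r - 2 * m))) * A r from
      hode r hr] at this
  -- the two conserved quantities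
  set φ : ℝ → ℝ := fun s => A s * (-2 * m * s / (s - 2 * m)) - W s * (s / (s - 2 * m)) with hφdef
  set ψ : ℝ → ℝ := fun s => A s * (2 * m * (s - 2 * m) / s) - W s * ((s - 2 * m) / s) with hψdef
  have hφd : ∀ r ∈ Ici r₀, HasDerivWithinAt φ 0 (Ici r₀) r := by
    intro r hr
    obtain ⟨hr1, hr2⟩ := hpos r hr
    have hr2' : r - 2 * m ≠ 0 := ne_of_gt hr2
    have hg : HasDerivAt (fun s : ℝ => -2 * m * s / (s - 2 * m))
        ((-2 * m * (r - 2 * m) - -2 * m * r * 1) / (r - 2 * m) ^ 2) r := by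
      simpa [Pi.div_def] using (((hasDerivAt_id r).const_mul (-2 * m)).div
        ((hasDerivAt_id r).sub_const (2 * m)) hr2')
    have hu : HasDerivAt (fun s : ℝ => s / (s - 2 * m))
        ((1 * (r - 2 * m) - r * 1) / (r - 2 * m) ^ 2) r := by
      simpa [Pi.div_def] using ((hasDerivAt_id r).div ((hasDerivAt_id r).sub_const (2 * m)) hr2')
    have h1 := ((hAd r hr).mul hg.hasDerivWithinAt).sub
      ((hWd r hr).mul hu.hasDerivWithinAt)
    refine h1.congr_deriv ?_
    have hm4 : (4:ℝ) * m ^ 2 ≠ 0 := by positivity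
    simp only [hWdef]
    field_simp
    ring
  have hψd : ∀ r ∈ Ici r₀, HasDerivWithinAt ψ 0 (Ici r₀) r := by
    intro r hr
    obtain ⟨hr1, hr2⟩ := hpos r hr
    have hr1' : r ≠ 0 := ne_of_gt hr1
    have hr2' : r - 2 * m ≠ 0 := ne_of_gt hr2
    have hg : HasDerivAt (fun s : ℝ => 2 * m * (s - 2 * m) / s)
        ((2 * m * 1 * r - 2 * m * (r - 2 * m) * 1) / r ^ 2) r := by
      simpa [Pi.div_def] using ((((hasDerivAt_id r).sub_const (2 * m)).const_mul (2 * m)).div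
        (hasDerivAt_id r) hr1')
    have hu : HasDerivAt (fun s : ℝ => (s - 2 * m) / s)
        ((1 * r - (r - 2 * m) * 1) / r ^ 2) r := by
      simpa [Pi.div_def] using (((hasDerivAt_id r).sub_const (2 * m)).div (hasDerivAt_id r) hr1')
    have h1 := ((hAd r hr).mul hg.hasDerivWithinAt).sub
      ((hWd r hr).mul hu.hasDerivWithinAt)
    refine h1.congr_deriv ?_
    simp only [hWdef]
    field_simp
    ring
  -- constancy
  have hconst : ∀ (f : ℝ → ℝ), (∀ r ∈ Ici r₀, HasDerivWithinAt f 0 (Ici r₀) r) →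
      ∀ r ∈ Ici r₀, f r = f r₀ := by
    intro f hf r hr
    refine (convex_Ici r₀).is_const_of_fderivWithin_eq_zero
      (fun x hx => (hf x hx).differentiableWithinAt) ?_ hr (self_mem_Ici)
    intro x hx
    have h := (hf x hx).hasFDerivWithinAt.fderivWithin (hud x hx)
    rw [h]
    ext
    simp
  have hφc := hconst φ hφd
  have hψc := hconst ψ hψd
  -- explicit formula for A
  have hform : ∀ r ∈ Ici r₀, A r =
      (ψ r₀ * (r / (r - 2 * m)) - φ r₀ * ((r - 2 * m) / r)) / (4 * m) := by
    intro r hr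
    obtain ⟨hr1, hr2⟩ := hpos r hr
    have hr1' : r ≠ 0 := ne_of_gt hr1
    have hr2' : r - 2 * m ≠ 0 := ne_of_gt hr2
    have key : ψ r₀ * (r / (r - 2 * m)) - φ r₀ * ((r - 2 * m) / r) = A r * (4 * m) := by
      rw [← hφc r hr, ← hψc r hr]
      simp only [hφdef, hψdef, hWdef]
      field_simp
      ring
    rw [key]
    field_simp
  -- values of the conserved quantities
  have hφ0 : φ r₀ = -a₀ * r₀ := by
    have hr0 : r₀ ∈ Ici r₀ := self_mem_Ici
    obtain ⟨hr1, hr2⟩ := hpos r₀ hr0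
    have hr1' : r₀ ≠ 0 := ne_of_gt hr1
    have hr2' : r₀ - 2 * m ≠ 0 := ne_of_gt hr2
    simp only [hφdef, hWdef, ← hA'def, hA0, hA'0]
    field_simp
    ring
  have hψ0 : ψ r₀ = a₀ * (r₀ - 2 * m) := by
    have hr0 : r₀ ∈ Ici r₀ := self_mem_Ici
    obtain ⟨hr1, hr2⟩ := hpos r₀ hr0
    have hr1' : r₀ ≠ 0 := ne_of_gt hr1
    have hr2' : r₀ - 2 * m ≠ 0 := ne_of_gt hr2
    simp only [hψdef, hWdef, ← hA'def, hA0, hA'0]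
    field_simp
    ring
  -- the limit of the explicit formula
  have hlim2 : Tendsto (fun r : ℝ => r / (r - 2 * m)) atTop (nhds 1) := by
    have h1 : Tendsto (fun r : ℝ => 2 * m / (r - 2 * m)) atTop (nhds 0) :=
      tendsto_const_nhds.div_atTop (tendsto_atTop_add_const_right _ _ tendsto_id)
    have h2 : Tendsto (fun r : ℝ => 1 + 2 * m / (r - 2 * m)) atTop (nhds (1 + 0)) :=
      tendsto_const_nhds.add h1
    rw [add_zero] at h2
    refine h2.congr' ?_
    filter_upwards [eventually_ne_atTop (2 * m)] with r hr
    have : r - 2 * m ≠ 0 := sub_ne_zero_of_ne hr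
    field_simp
    ring
  have hlim1 : Tendsto (fun r : ℝ => (r - 2 * m) / r) atTop (nhds 1) := by
    have h1 : Tendsto (fun r : ℝ => 2 * m / r) atTop (nhds 0) :=
      tendsto_const_nhds.div_atTop tendsto_id
    have h2 : Tendsto (fun r : ℝ => 1 - 2 * m / r) atTop (nhds (1 - 0)) :=
      tendsto_const_nhds.sub h1
    rw [sub_zero] at h2
    refine h2.congr' ?_
    filter_upwards [eventually_ne_atTop (0:ℝ)] with r hr
    field_simp
  have hlimF : Tendsto (fun r : ℝ =>
      (ψ r₀ * (r / (r - 2 * m)) - φ r₀ * ((r - 2 * m) / r)) / (4 * m)) atTop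
      (nhds ((ψ r₀ * 1 - φ r₀ * 1) / (4 * m))) := by
    exact (((tendsto_const_nhds.mul hlim2).sub (tendsto_const_nhds.mul hlim1)).div
      tendsto_const_nhds (by positivity))
  have hval : (ψ r₀ * 1 - φ r₀ * 1) / (4 * m) = (r₀ / (2 * m) - 1 / 2) * a₀ := by
    rw [hφ0, hψ0]
    field_simp
    ring
  rw [← hval]
  refine hlimF.congr' ?_
  filter_upwards [eventually_ge_atTop r₀] with r hr
  exact (hform r hr).symm
end

section
/- Let m ∈ ℝ with m ≠ 0, m₀ := max{0, m}, and r₀ > 2m₀. Suppose a : [r₀,∞) → ℝ is twice continuously differentiable, solves the Schwarzschild radial ODE with parameters (m, r₀, ℓ) for ℓ = 1, satisfies the Bartnik initial condition, and a(r₀) ≠ 0. If a'(r) → 0 as r → ∞, then a(r) does not converge to any finite limit as r → ∞. -/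
open Set Filter

/-- For `m ≠ 0` and `ℓ = 1`, a `C²` solution of the Schwarzschild radial ODE
with the Bartnik initial condition and `a(r₀) ≠ 0` whose derivative tends to `0` cannot
converge to a finite limit. -/
theorem schwarzschild_radial_ode_ell_one_no_limit
    (m r₀ : ℝ) (hm : m ≠ 0) (hr₀ : 2 * max 0 m < r₀)
    (a : ℝ → ℝ) (ha : ContDiffOn ℝ 2 a (Ici r₀))
    (hode : ∀ r ∈ Ici r₀,
      derivWithin (fun s => s * (s - 2 * m) * derivWithin a (Ici r₀) s) (Ici r₀) r
        = (4 * m ^ 2 / (r * (r - 2 * m)) + (1 : ℝ) * ((1 : ℝ) + 1)) * a r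
          - (2 * m / (r * (r - 2 * m))) *
            ((4 * m - r₀) * a r₀ + r₀ * (r₀ - 2 * m) * derivWithin a (Ici r₀) r₀))
    (hinit : derivWithin a (Ici r₀) r₀
        = (1 / (2 * (r₀ - 2 * m))) * ((1 : ℝ) * ((1 : ℝ) + 1) - 2 * m / r₀) * a r₀)
    (ha0 : a r₀ ≠ 0)
    (hlima' : Tendsto (derivWithin a (Ici r₀)) atTop (nhds 0)) :
    ¬ ∃ L : ℝ, Tendsto a atTop (nhds L) := by
  rintro ⟨L, hL⟩
  have hr0pos : 0 < r₀ := lt_of_le_of_lt (by positivity) hr₀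
  have hrm : 2 * m < r₀ := lt_of_le_of_lt (by simp [le_max_right 0 m]) hr₀
  set b := derivWithin a (Ici r₀) with hbdef
  have hUD : UniqueDiffOn ℝ (Ici r₀) := uniqueDiffOn_Ici r₀
  have hpos : ∀ r ∈ Ici r₀, 0 < r ∧ 0 < r - 2 * m := by
    intro r hr
    have hr' : r₀ ≤ r := hr
    constructor <;> linarith
  have haD : DifferentiableOn ℝ a (Ici r₀) := ha.differentiableOn two_ne_zero
  have hbC : ContDiffOn ℝ 1 b (Ici r₀) := ha.derivWithin hUD (by norm_num)
  have hbD : DifferentiableOn ℝ b (Ici r₀) := hbC.differentiableOn one_ne_zero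
  have hr₀ne : r₀ ≠ 0 := ne_of_gt hr0pos
  have hr₀2ne : r₀ - 2 * m ≠ 0 := by intro h; linarith
  set A := a r₀ with hAdef
  have hC : (4 * m - r₀) * A + r₀ * (r₀ - 2 * m) * b r₀ = 3 * m * A := by
    rw [hinit]
    field_simp [show r₀ - m * 2 ≠ 0 by linarith]
    ring
  -- the ODE rewritten as a formula for derivWithin b
  have hE : ∀ r ∈ Ici r₀, r * (r - 2 * m) * derivWithin b (Ici r₀) r
      = (4 * m ^ 2 / (r * (r - 2 * m)) + 2) * a r
        - (2 * m / (r * (r - 2 * m))) * (3 * m * A) - (2 * r - 2 * m) * b r := by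
    intro r hr
    obtain ⟨hr1, hr2⟩ := hpos r hr
    have hp : HasDerivWithinAt (fun s : ℝ => s * (s - 2 * m)) (2 * r - 2 * m) (Ici r₀) r := by
      have := ((hasDerivAt_id r).mul ((hasDerivAt_id r).sub_const (2 * m))).hasDerivWithinAt
        (s := Ici r₀)
      refine this.congr_deriv ?_
      simp
      ring
    have h1 : HasDerivWithinAt (fun s => s * (s - 2 * m) * b s)
        ((2 * r - 2 * m) * b r + r * (r - 2 * m) * derivWithin b (Ici r₀) r) (Ici r₀) r :=
      hp.mul ((hbD r hr).hasDerivWithinAt)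
    have h2 := h1.derivWithin (hUD r hr)
    rw [hode r hr] at h2
    rw [hC] at h2
    have : (1 : ℝ) * ((1 : ℝ) + 1) = 2 := by norm_num
    rw [this] at h2
    linarith
  -- the conserved quantity
  set F : ℝ → ℝ := fun r => b r + (r⁻¹ + (r - 2 * m)⁻¹) * a r
      - 3 * A / 2 * (r⁻¹ + (r - 2 * m)⁻¹)
      - 3 * A / (2 * m) * Real.log ((r - 2 * m) / r) with hFdef
  have hF' : ∀ r ∈ Ici r₀, HasDerivWithinAt F 0 (Ici r₀) r := by
    intro r hr
    obtain ⟨hr1, hr2⟩ := hpos r hr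
    have hrne : r ≠ 0 := ne_of_gt hr1
    have hrne2 : r - 2 * m ≠ 0 := ne_of_gt hr2
    have hΔ : r * (r - 2 * m) ≠ 0 := mul_ne_zero hrne hrne2
    have hg : HasDerivAt (fun s : ℝ => s⁻¹ + (s - 2 * m)⁻¹)
        (-(r ^ 2)⁻¹ + -1 / (r - 2 * m) ^ 2) r := by
      have h1 := hasDerivAt_inv hrne
      have h2 := ((hasDerivAt_id r).sub_const (2 * m)).inv hrne2
      exact h1.add h2
    have hq : HasDerivAt (fun s : ℝ => (s - 2 * m) / s)
        ((1 * r - (r - 2 * m) * 1) / r ^ 2) r :=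
      ((hasDerivAt_id r).sub_const (2 * m)).div (hasDerivAt_id r) hrne
    have hlog : HasDerivAt (fun s : ℝ => Real.log ((s - 2 * m) / s))
        (((1 * r - (r - 2 * m) * 1) / r ^ 2) / ((r - 2 * m) / r)) r := by
      have hratio : (r - 2 * m) / r ≠ 0 := div_ne_zero hrne2 hrne
      exact hq.log hratio
    have hD : HasDerivWithinAt F
        (derivWithin b (Ici r₀) r
          + ((-(r ^ 2)⁻¹ + -1 / (r - 2 * m) ^ 2) * a r + (r⁻¹ + (r - 2 * m)⁻¹) * b r)
          - 3 * A / 2 * (-(r ^ 2)⁻¹ + -1 / (r - 2 * m) ^ 2)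
          - 3 * A / (2 * m) * (((1 * r - (r - 2 * m) * 1) / r ^ 2) / ((r - 2 * m) / r)))
        (Ici r₀) r := by
      exact (((hbD r hr).hasDerivWithinAt.add
          (hg.hasDerivWithinAt.mul (haD r hr).hasDerivWithinAt)).sub
          (hg.hasDerivWithinAt.const_mul (3 * A / 2))).sub
          (hlog.hasDerivWithinAt.const_mul (3 * A / (2 * m)))
    convert hD using 1
    have hb'val : derivWithin b (Ici r₀) r
        = ((4 * m ^ 2 / (r * (r - 2 * m)) + 2) * a r
            - (2 * m / (r * (r - 2 * m))) * (3 * m * A) - (2 * r - 2 * m) * b r)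
          / (r * (r - 2 * m)) := by
      rw [eq_div_iff hΔ]
      have := hE r hr
      linarith
    rw [hb'val]
    field_simp [show r - m * 2 ≠ 0 by linarith]
    ring
  -- F is constant on Ici r₀
  have hconst : ∀ r ∈ Ici r₀, F r = F r₀ := by
    intro r hr
    have hcont : ContinuousOn F (Icc r₀ r) := fun x hx =>
      ((hF' x hx.1).continuousWithinAt).mono Icc_subset_Ici_self
    have hderiv : ∀ x ∈ Ico r₀ r, HasDerivWithinAt F 0 (Ici x) x := fun x hx =>
      (hF' x hx.1).mono (Ici_subset_Ici.mpr hx.1)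
    exact constant_of_has_deriv_right_zero hcont hderiv r ⟨hr, le_rfl⟩
  -- limits
  have h2' : Tendsto (fun r : ℝ => (r - 2 * m)⁻¹) atTop (nhds 0) := by
    apply tendsto_inv_atTop_zero.comp
    apply tendsto_atTop_add_const_right _ (-(2 * m))
    · exact tendsto_id
  have h2'' : Tendsto (fun r : ℝ => (r - 2 * m)⁻¹) atTop (nhds 0) := by
    apply Tendsto.congr _ h2'
    intro x; rfl
  have hg0 : Tendsto (fun r : ℝ => r⁻¹ + (r - 2 * m)⁻¹) atTop (nhds 0) := by
    have := tendsto_inv_atTop_zero.add h2''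
    simpa using this
  have hratio1 : Tendsto (fun r : ℝ => (r - 2 * m) / r) atTop (nhds 1) := by
    have h : Tendsto (fun r : ℝ => 1 - 2 * m * r⁻¹) atTop (nhds 1) := by
      have := (tendsto_inv_atTop_zero (𝕜 := ℝ)).const_mul (2 * m)
      have h' := tendsto_const_nhds (x := (1 : ℝ)) (f := atTop).sub this
      simpa using h'
    apply Tendsto.congr' _ h
    filter_upwards [eventually_gt_atTop (0 : ℝ)] with r hrpos
    field_simp
  have hlog0 : Tendsto (fun r : ℝ => Real.log ((r - 2 * m) / r)) atTop (nhds 0) := by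
    have := (Real.continuousAt_log one_ne_zero).tendsto.comp hratio1
    simpa [Real.log_one, Function.comp_def] using this
  have hFlim : Tendsto F atTop (nhds 0) := by
    have := ((hlima'.add (hg0.mul hL)).sub (hg0.const_mul (3 * A / 2))).sub
      (hlog0.const_mul (3 * A / (2 * m)))
    simpa using this
  have hFconst : Tendsto F atTop (nhds (F r₀)) := by
    apply Tendsto.congr' _ (tendsto_const_nhds (x := F r₀))
    filter_upwards [eventually_ge_atTop r₀] with r hr
    exact (hconst r hr).symm
  have h0 : F r₀ = 0 := tendsto_nhds_unique hFconst hFlim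
  -- compute F r₀
  have hb₀ : b r₀ = (r₀ - m) / (r₀ * (r₀ - 2 * m)) * A := by
    rw [hinit]
    field_simp
    ring
  have hF0 : F r₀ = -(3 * A / (2 * m)) * Real.log ((r₀ - 2 * m) / r₀) := by
    rw [hFdef]
    simp only
    rw [hb₀]
    field_simp [show r₀ - m * 2 ≠ 0 by linarith]
    ring
  rw [hF0] at h0
  have hcoef : -(3 * A / (2 * m)) ≠ 0 := by
    simp only [ne_eq, neg_eq_zero, div_eq_zero_iff]
    push_neg
    constructor
    · intro h
      rcases mul_eq_zero.mp h with h | h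
      · norm_num at h
      · exact ha0 h
    · intro h
      rcases mul_eq_zero.mp h with h | h
      · norm_num at h
      · exact hm h
  have hlogz : Real.log ((r₀ - 2 * m) / r₀) = 0 := by
    rcases mul_eq_zero.mp h0 with h | h
    · exact absurd h hcoef
    · exact h
  have hratpos : 0 < (r₀ - 2 * m) / r₀ := div_pos (by linarith) hr0pos
  rcases Real.log_eq_zero.mp hlogz with h | h | h
  · linarith
  · have hval : r₀ - 2 * m = r₀ := by
      rwa [div_eq_one_iff_eq hr₀ne] at h
    exact hm (by linarith)
  · linarith
end

section
/- Let m ∈ ℝ, m₀ := max{0, m}, r₀ > 2m₀, and let ℓ ≥ 2 be an integer. Suppose B : [r₀,∞) → ℝ is twice continuously differentiable and satisfies (d/dr)(r(r−2m)·B'(r)) = (4m²/(r(r−2m)) + ℓ(ℓ+1))·B(r) for all r ≥ r₀. If B(r₀) ≥ 0 and 2(r₀−m)·B(r₀) + r₀(r₀−2m)·B'(r₀) > 0, then B(r) > 0 for all r > r₀ and B(r) → +∞ as r → ∞. -/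
open Set Filter

/-- For `ℓ ≥ 2`, a `C²` solution of the homogeneous radial equation
`(r(r−2m) B')' = (4m²/(r(r−2m)) + ℓ(ℓ+1)) B` with `B(r₀) ≥ 0` and
`f'(r₀) = 2(r₀−m) B(r₀) + r₀(r₀−2m) B'(r₀) > 0` is positive on `(r₀, ∞)` and tends
to `+∞`. -/
theorem homogeneous_radial_ode_positive_and_diverges
    (m r₀ : ℝ) (hr₀ : 2 * max 0 m < r₀) (ℓ : ℕ) (hℓ : 2 ≤ ℓ)
    (B : ℝ → ℝ) (hB : ContDiffOn ℝ 2 B (Ici r₀))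
    (hode : ∀ r ∈ Ici r₀,
      derivWithin (fun s => s * (s - 2 * m) * derivWithin B (Ici r₀) s) (Ici r₀) r
        = (4 * m ^ 2 / (r * (r - 2 * m)) + (ℓ : ℝ) * ((ℓ : ℝ) + 1)) * B r)
    (hB0 : 0 ≤ B r₀)
    (hf'0 : 0 < 2 * (r₀ - m) * B r₀ + r₀ * (r₀ - 2 * m) * derivWithin B (Ici r₀) r₀) :
    (∀ r, r₀ < r → 0 < B r) ∧ Tendsto B atTop atTop := by
  have hm0 : (0:ℝ) ≤ max 0 m := le_max_left 0 m
  have hmm : m ≤ max 0 m := le_max_right 0 m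
  have hr0pos : 0 < r₀ := lt_of_le_of_lt (by positivity) hr₀
  have hrm2 : 2 * m < r₀ := lt_of_le_of_lt (by nlinarith) hr₀
  have hrm1 : m < r₀ := by nlinarith
  have hU : UniqueDiffOn ℝ (Ici r₀) := uniqueDiffOn_Ici r₀
  set B' := derivWithin B (Ici r₀) with hB'def
  have hBd : DifferentiableOn ℝ B (Ici r₀) := hB.differentiableOn two_ne_zero
  have hB'c : ContDiffOn ℝ 1 B' (Ici r₀) := hB.derivWithin hU (by norm_num)
  have hB'd : DifferentiableOn ℝ B' (Ici r₀) := hB'c.differentiableOn one_ne_zero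
  have hBc : ContinuousOn B (Ici r₀) := hBd.continuousOn
  have hB'cont : ContinuousOn B' (Ici r₀) := hB'c.continuousOn
  set L : ℝ := (ℓ : ℝ) * ((ℓ : ℝ) + 1) with hLdef
  have hL : (6:ℝ) ≤ L := by
    have h2 : (2:ℝ) ≤ (ℓ:ℝ) := by exact_mod_cast hℓ
    nlinarith
  have hpos : ∀ r ∈ Ici r₀, 0 < r * (r - 2*m) := by
    intro r hr
    have : r₀ ≤ r := hr
    nlinarith
  have hrm : ∀ r ∈ Ici r₀, 0 < r - m := by
    intro r hr
    have : r₀ ≤ r := hr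
    nlinarith
  have hpd : ∀ x : ℝ, HasDerivAt (fun s => s * (s - 2*m)) (2*x - 2*m) x := by
    intro x
    have h : HasDerivAt (fun s : ℝ => s * (s - 2*m)) (1*(x - 2*m) + x*1) x :=
      (hasDerivAt_id x).mul ((hasDerivAt_id x).sub_const (2*m))
    convert h using 1
    ring
  set F : ℝ → ℝ := fun r => 2*(r - m) * B r + r * (r - 2*m) * B' r with hFdef
  set f : ℝ → ℝ := fun r => r * (r - 2*m) * B r with hfdef
  set G : ℝ → ℝ := fun r => 2 * B r + 2*(r - m) * B' r
      + (4 * m ^ 2 / (r * (r - 2*m)) + L) * B r with hGdef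
  -- derivative facts
  have hfF : ∀ r ∈ Ici r₀, HasDerivWithinAt f (F r) (Ici r₀) r := by
    intro r hr
    have h1 := ((hpd r).hasDerivWithinAt).mul (hBd r hr).hasDerivWithinAt
    have : F r = (2*r - 2*m) * B r + r * (r - 2*m) * derivWithin B (Ici r₀) r := by
      simp only [hFdef, ← hB'def]
      ring
    rw [hfdef, this]
    exact h1
  have hgd : ∀ r ∈ Ici r₀,
      HasDerivWithinAt (fun s => s * (s - 2*m) * B' s)
        ((4 * m ^ 2 / (r * (r - 2*m)) + L) * B r) (Ici r₀) r := by
    intro r hr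
    have hd : DifferentiableWithinAt ℝ (fun s => s * (s - 2*m) * B' s) (Ici r₀) r :=
      ((hpd r).differentiableAt.differentiableWithinAt).mul (hB'd r hr)
    have h := hd.hasDerivWithinAt
    rwa [hode r hr] at h
  have hFG : ∀ r ∈ Ici r₀, HasDerivWithinAt F (G r) (Ici r₀) r := by
    intro r hr
    have h1 : HasDerivAt (fun s : ℝ => 2*(s - m)) 2 r := by
      have := ((hasDerivAt_id r).sub_const m).const_mul 2
      simpa using this
    have h2 := (h1.hasDerivWithinAt).mul (hBd r hr).hasDerivWithinAt
    have h3 := h2.add (hgd r hr)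
    have : G r = (2 * B r + 2*(r - m) * derivWithin B (Ici r₀) r)
        + (4 * m ^ 2 / (r * (r - 2*m)) + L) * B r := by
      simp only [hGdef, ← hB'def]
    rw [hFdef, this]
    exact h3
  -- continuity
  have hpc : ContinuousOn (fun s : ℝ => s * (s - 2*m)) (Ici r₀) :=
    (continuous_id.mul (continuous_id.sub continuous_const)).continuousOn
  have hfc : ContinuousOn f (Ici r₀) := hpc.mul hBc
  have hFc : ContinuousOn F (Ici r₀) := by
    apply ContinuousOn.add
    · exact (continuous_const.mul (continuous_id.sub continuous_const)).continuousOn.mul hBc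
    · exact hpc.mul hB'cont
  -- the key algebraic identity
  have hGid : ∀ r ∈ Ici r₀, G r * (r * (r - 2*m)) = 2*(r - m) * F r + (L - 2) * f r := by
    intro r hr
    have hp := (hpos r hr).ne'
    simp only [hGdef, hFdef, hfdef]
    have hc : 4 * m ^ 2 / (r * (r - 2*m)) * (r * (r - 2*m)) = 4 * m ^ 2 := div_mul_cancel₀ _ hp
    linear_combination (B r) * hc
  have hGnn : ∀ r ∈ Ici r₀, 0 ≤ F r → 0 ≤ f r → 0 ≤ G r := by
    intro r hr hF hf
    have hp := hpos r hr
    have h1 : 0 ≤ 2*(r - m) * F r + (L - 2) * f r := by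
      have := hrm r hr
      have hL2 : (0:ℝ) ≤ L - 2 := by linarith
      positivity
    nlinarith [hGid r hr]
  have hr₀F : 0 < F r₀ := hf'0
  have hf0 : 0 ≤ f r₀ := mul_nonneg (hpos r₀ self_mem_Ici).le hB0
  -- interior derivative facts
  have hfd : ∀ x, r₀ < x → HasDerivAt f (F x) x := fun x hx =>
    (hfF x hx.le).hasDerivAt (Ici_mem_nhds hx)
  have hFd : ∀ x, r₀ < x → HasDerivAt F (G x) x := fun x hx =>
    (hFG x hx.le).hasDerivAt (Ici_mem_nhds hx)
  -- F is positive on all of [r₀, ∞)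
  have hFpos : ∀ r ∈ Ici r₀, 0 < F r := by
    by_contra hcon
    push_neg at hcon
    obtain ⟨r₂, hr₂, hFr₂⟩ := hcon
    set Z : Set ℝ := Ici r₀ ∩ F ⁻¹' (Iic 0) with hZ
    have hZc : IsClosed Z := hFc.preimage_isClosed_of_isClosed isClosed_Ici isClosed_Iic
    have hZne : Z.Nonempty := ⟨r₂, hr₂, hFr₂⟩
    have hZbdd : BddBelow Z := ⟨r₀, fun x hx => hx.1⟩
    set r₁ := sInf Z with hr₁def
    have hr₁Z : r₁ ∈ Z := hZc.csInf_mem hZne hZbdd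
    have hr₁gt : r₀ < r₁ := by
      rcases lt_or_eq_of_le (mem_Ici.1 hr₁Z.1) with h | h
      · exact h
      · exact absurd (hr₁Z.2 : F r₁ ≤ 0) (by rw [← h]; exact not_le.2 hr₀F)
    have hFpos' : ∀ s ∈ Ico r₀ r₁, 0 < F s := by
      intro s hs
      by_contra h
      push_neg at h
      exact absurd (csInf_le hZbdd ⟨hs.1, h⟩) (not_le.2 hs.2)
    have hfmono : MonotoneOn f (Icc r₀ r₁) := by
      apply monotoneOn_of_deriv_nonneg (convex_Icc _ _) (hfc.mono Icc_subset_Ici_self)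
      · intro x hx
        rw [interior_Icc] at hx
        exact (hfd x hx.1).differentiableAt.differentiableWithinAt
      · intro x hx
        rw [interior_Icc] at hx
        rw [(hfd x hx.1).deriv]
        exact (hFpos' x ⟨hx.1.le, hx.2⟩).le
    have hfnn : ∀ x ∈ Icc r₀ r₁, 0 ≤ f x := fun x hx =>
      hf0.trans (hfmono (left_mem_Icc.2 hr₁gt.le) hx hx.1)
    have hFmono : MonotoneOn F (Icc r₀ r₁) := by
      apply monotoneOn_of_deriv_nonneg (convex_Icc _ _) (hFc.mono Icc_subset_Ici_self)
      · intro x hx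
        rw [interior_Icc] at hx
        exact (hFd x hx.1).differentiableAt.differentiableWithinAt
      · intro x hx
        rw [interior_Icc] at hx
        rw [(hFd x hx.1).deriv]
        exact hGnn x (le_of_lt hx.1) (hFpos' x ⟨hx.1.le, hx.2⟩).le
          (hfnn x ⟨hx.1.le, hx.2.le⟩)
    have : F r₀ ≤ F r₁ :=
      hFmono (left_mem_Icc.2 hr₁gt.le) (right_mem_Icc.2 hr₁gt.le) hr₁gt.le
    have := hr₁Z.2
    simp only [mem_preimage, mem_Iic] at this
    linarith
  -- f is strictly monotone, hence positive past r₀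
  have hfsm : StrictMonoOn f (Ici r₀) := by
    apply strictMonoOn_of_deriv_pos (convex_Ici r₀) hfc
    intro x hx
    rw [interior_Ici] at hx
    rw [(hfd x hx).deriv]
    exact hFpos x (mem_Ici.2 (le_of_lt hx))
  have hfpos : ∀ r, r₀ < r → 0 < f r := fun r hr =>
    lt_of_le_of_lt hf0 (hfsm self_mem_Ici hr.le hr)
  have hBpos : ∀ r, r₀ < r → 0 < B r := by
    intro r hr
    have hp := hpos r hr.le
    have hf := hfpos r hr
    have : f r = r * (r - 2*m) * B r := rfl
    nlinarith
  have hfnn : ∀ r ∈ Ici r₀, 0 ≤ f r := by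
    intro r hr
    rcases eq_or_lt_of_le (mem_Ici.1 hr) with h | h
    · rw [← h]; exact hf0
    · exact (hfpos r h).le
  -- F/p is monotone
  have hφmono : MonotoneOn (fun r => F r / (r * (r - 2*m))) (Ici r₀) := by
    apply monotoneOn_of_deriv_nonneg (convex_Ici r₀)
    · exact hFc.div hpc fun x hx => (hpos x hx).ne'
    · intro x hx
      rw [interior_Ici] at hx
      exact ((hFd x hx).div (hpd x) (hpos x (mem_Ici.2 (le_of_lt hx))).ne').differentiableAt.differentiableWithinAt
    · intro x hx
      rw [interior_Ici] at hx
      rw [(show HasDerivAt (fun r => F r / (r * (r - 2*m))) _ x from (hFd x hx).div (hpd x) (hpos x (mem_Ici.2 (le_of_lt hx))).ne').deriv]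
      have hnum : G x * (x * (x - 2*m)) - F x * (2*x - 2*m) = (L - 2) * f x := by
        have := hGid x (mem_Ici.2 (le_of_lt hx))
        linarith [this]
      rw [hnum]
      have hL2 : (0:ℝ) ≤ L - 2 := by linarith
      have hfx := hfnn x (mem_Ici.2 (le_of_lt hx))
      positivity
  obtain ⟨K, hK, hFK⟩ : ∃ K, 0 < K ∧ ∀ r ∈ Ici r₀, K * (r * (r - 2*m)) ≤ F r := by
    refine ⟨F r₀ / (r₀ * (r₀ - 2*m)), div_pos hr₀F (hpos r₀ self_mem_Ici), ?_⟩
    intro r hr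
    have h := hφmono self_mem_Ici hr hr
    have hp := hpos r hr
    calc F r₀ / (r₀ * (r₀ - 2*m)) * (r * (r - 2*m))
        ≤ F r / (r * (r - 2*m)) * (r * (r - 2*m)) := by
          apply mul_le_mul_of_nonneg_right h hp.le
      _ = F r := div_mul_cancel₀ _ hp.ne'
  -- compare f with the antiderivative of K p
  have hPd : ∀ x : ℝ, HasDerivAt (fun s : ℝ => s^3/3 - m*s^2) (x * (x - 2*m)) x := by
    intro x
    have h : HasDerivAt (fun s : ℝ => s^3/3 - m*s^2) _ x := ((hasDerivAt_pow 3 x).div_const 3).sub ((hasDerivAt_pow 2 x).const_mul m)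
    convert h using 1
    push_cast
    ring
  have hGmono : MonotoneOn (fun r => f r - K * (r^3/3 - m*r^2)) (Ici r₀) := by
    apply monotoneOn_of_deriv_nonneg (convex_Ici r₀)
    · exact hfc.sub ((continuous_const.mul
        ((continuous_pow 3).div_const 3 |>.sub (continuous_const.mul (continuous_pow 2)))).continuousOn)
    · intro x hx
      rw [interior_Ici] at hx
      exact ((hfd x hx).sub ((hPd x).const_mul K)).differentiableAt.differentiableWithinAt
    · intro x hx
      rw [interior_Ici] at hx
      rw [(show HasDerivAt (fun r => f r - K * (r^3/3 - m*r^2)) _ x from (hfd x hx).sub ((hPd x).const_mul K)).deriv]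
      have := hFK x (mem_Ici.2 (le_of_lt hx))
      linarith
  obtain ⟨C, hflb⟩ : ∃ C, ∀ r ∈ Ici r₀, C + K * (r^3/3 - m*r^2) ≤ f r := by
    refine ⟨f r₀ - K * (r₀^3/3 - m*r₀^2), fun r hr => ?_⟩
    have h := hGmono self_mem_Ici hr hr
    simp only at h
    linarith
  -- final bound and divergence
  have hbound : ∀ᶠ r in atTop, K/6 * r ≤ B r := by
    rw [eventually_atTop]
    refine ⟨max (max 1 (8*|m|)) (max (12*|C|/K) (r₀+1)), fun r hr => ?_⟩
    have h1 : 1 ≤ r := le_trans (le_trans (le_max_left _ _) (le_max_left _ _)) hr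
    have h2 : 8*|m| ≤ r := le_trans (le_trans (le_max_right _ _) (le_max_left _ _)) hr
    have h3 : 12*|C|/K ≤ r := le_trans (le_trans (le_max_left _ _) (le_max_right _ _)) hr
    have h4 : r₀ < r :=
      lt_of_lt_of_le (lt_add_one r₀) (le_trans (le_trans (le_max_right _ _) (le_max_right _ _)) hr)
    have hp := hpos r h4.le
    have hfl := hflb r h4.le
    have h3' : 12*|C| ≤ K * r := by
      rw [div_le_iff₀ hK] at h3
      linarith
    have hm8 : m ≤ r/8 := by linarith [le_abs_self m]
    have e1' : K * (m * r^2) ≤ K * (r^3/8) := by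
      apply mul_le_mul_of_nonneg_left _ hK.le
      have h := mul_le_mul_of_nonneg_right hm8 (sq_nonneg r)
      have hring : r/8 * r^2 = r^3/8 := by ring
      linarith
    have e2 : -(K * (r^3/12)) ≤ C := by
      have hr3 : r ≤ r^3 := by
        have h0 : (0:ℝ) ≤ (r-1)*r*(r+1) :=
          mul_nonneg (mul_nonneg (by linarith) (by linarith)) (by linarith)
        have hring : (r-1)*r*(r+1) = r^3 - r := by ring
        linarith
      have h5 : K * r ≤ K * r^3 := mul_le_mul_of_nonneg_left hr3 hK.le
      linarith [neg_abs_le C]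
    have key : K/6 * r * (r * (r - 2*m)) ≤ C + K * (r^3/3 - m*r^2) := by
      linarith [e1', e2]
    have hfr : f r = B r * (r * (r - 2*m)) := by simp only [hfdef]; ring
    have key2 : K/6 * r * (r * (r - 2*m)) ≤ B r * (r * (r - 2*m)) := by
      linarith [key, hfl, hfr.symm.le, hfr.le]
    exact le_of_mul_le_mul_right key2 hp
  refine ⟨hBpos, ?_⟩
  have htop : Tendsto (fun r : ℝ => K/6 * r) atTop atTop :=
    Tendsto.const_mul_atTop (by positivity) tendsto_id
  exact tendsto_atTop_mono' atTop hbound htop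
end

section
/- Let m ∈ ℝ, m₀ := max{0, m}, r₀ > 2m₀, and let ℓ ≥ 0 be an integer. Suppose a : [r₀,∞) → ℝ is twice continuously differentiable, solves the Schwarzschild radial ODE with parameters (m, r₀, ℓ), satisfies the Bartnik initial condition, and a(r₀) = 0. Then a(r) = 0 for all r ≥ r₀. -/
open Set Filter

/-- A `C²` solution of the Schwarzschild radial ODE with the Bartnik
initial condition and `a(r₀) = 0` vanishes identically. -/
theorem schwarzschild_radial_ode_zero_initial_value
    (m r₀ : ℝ) (hr₀ : 2 * max 0 m < r₀) (ℓ : ℕ)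
    (a : ℝ → ℝ) (ha : ContDiffOn ℝ 2 a (Ici r₀))
    (hode : ∀ r ∈ Ici r₀,
      derivWithin (fun s => s * (s - 2 * m) * derivWithin a (Ici r₀) s) (Ici r₀) r
        = (4 * m ^ 2 / (r * (r - 2 * m)) + (ℓ : ℝ) * ((ℓ : ℝ) + 1)) * a r
          - (2 * m / (r * (r - 2 * m))) *
            ((4 * m - r₀) * a r₀ + r₀ * (r₀ - 2 * m) * derivWithin a (Ici r₀) r₀))
    (hinit : derivWithin a (Ici r₀) r₀
        = (1 / (2 * (r₀ - 2 * m))) * ((ℓ : ℝ) * ((ℓ : ℝ) + 1) - 2 * m / r₀) * a r₀)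
    (ha0 : a r₀ = 0) :
    ∀ r ∈ Ici r₀, a r = 0 := by
  -- abbreviations
  set a' : ℝ → ℝ := derivWithin a (Ici r₀) with ha'def
  set p : ℝ → ℝ := fun r => r * (r - 2 * m) with hpdef
  set u : ℝ → ℝ := fun r => p r * a' r with hudef
  set q : ℝ → ℝ := fun r => 4 * m ^ 2 / p r + (ℓ : ℝ) * ((ℓ : ℝ) + 1) with hqdef
  have hm : 2 * m < r₀ := lt_of_le_of_lt (by nlinarith [le_max_right (0:ℝ) m]) hr₀
  have hr₀pos : (0:ℝ) < r₀ := lt_of_le_of_lt (by nlinarith [le_max_left (0:ℝ) m]) hr₀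
  have hp0 : 0 < p r₀ := mul_pos hr₀pos (by linarith)
  have hp : ∀ r ∈ Ici r₀, 0 < p r := fun r hr =>
    mul_pos (lt_of_lt_of_le hr₀pos hr) (by simp only [mem_Ici] at hr; linarith)
  have hple : ∀ r ∈ Ici r₀, p r₀ ≤ p r := by
    intro r hr
    simp only [mem_Ici] at hr
    have : (0:ℝ) ≤ r₀ - 2 * m := by linarith
    exact mul_le_mul hr (by linarith) this (by linarith)
  have hud : UniqueDiffOn ℝ (Ici r₀) := uniqueDiffOn_Ici r₀
  -- initial conditions
  have ha'0 : a' r₀ = 0 := by rw [hinit, ha0, mul_zero]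
  have hu0 : u r₀ = 0 := by simp [hudef, ha'0]
  -- a' has derivatives; a is differentiable
  have hdiffa : DifferentiableOn ℝ a (Ici r₀) := ha.differentiableOn two_ne_zero
  have hca' : ContDiffOn ℝ 1 a' (Ici r₀) := ha.derivWithin hud (by norm_num)
  have hdiffa' : DifferentiableOn ℝ a' (Ici r₀) := hca'.differentiableOn one_ne_zero
  have hdiffu : DifferentiableOn ℝ u (Ici r₀) := by
    apply DifferentiableOn.mul _ hdiffa'
    exact (differentiable_id.mul (differentiable_id.sub_const _)).differentiableOn
  -- the ODE for u, using vanishing initial data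
  have hodeu : ∀ r ∈ Ici r₀, derivWithin u (Ici r₀) r = q r * a r := by
    intro r hr
    have := hode r hr
    rw [ha0, ha'0] at this
    simpa [hudef, hpdef, hqdef] using this
  -- derivative facts
  have hda : ∀ r ∈ Ici r₀, HasDerivWithinAt a (u r / p r) (Ici r₀) r := by
    intro r hr
    have h1 : HasDerivWithinAt a (a' r) (Ici r₀) r := (hdiffa r hr).hasDerivWithinAt
    have : u r / p r = a' r := by
      rw [hudef]; exact mul_div_cancel_left₀ _ (ne_of_gt (hp r hr))
    rwa [this]
  have hdu : ∀ r ∈ Ici r₀, HasDerivWithinAt u (q r * a r) (Ici r₀) r := by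
    intro r hr
    have h1 : HasDerivWithinAt u (derivWithin u (Ici r₀) r) (Ici r₀) r :=
      (hdiffu r hr).hasDerivWithinAt
    rwa [hodeu r hr] at h1
  -- Lipschitz-type constant
  set K : ℝ := 1 / p r₀ + (4 * m ^ 2 / p r₀ + (ℓ : ℝ) * ((ℓ : ℝ) + 1)) with hKdef
  have hK1 : ∀ r ∈ Ici r₀, 1 / p r ≤ K := by
    intro r hr
    have h1 : 1 / p r ≤ 1 / p r₀ := one_div_le_one_div_of_le hp0 (hple r hr)
    have h2 : (0:ℝ) ≤ 4 * m ^ 2 / p r₀ := div_nonneg (by positivity) hp0.le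
    have h3 : (0:ℝ) ≤ (ℓ : ℝ) * ((ℓ : ℝ) + 1) := by positivity
    rw [hKdef]; linarith
  have hKq : ∀ r ∈ Ici r₀, q r ≤ K := by
    intro r hr
    have h1 : 4 * m ^ 2 / p r ≤ 4 * m ^ 2 / p r₀ :=
      div_le_div_of_nonneg_left (by positivity) hp0 (hple r hr)
    have h2 : (0:ℝ) ≤ 1 / p r₀ := by positivity
    rw [hKdef, hqdef]; simp only; linarith
  have hq0 : ∀ r ∈ Ici r₀, 0 ≤ q r := by
    intro r hr
    have : (0:ℝ) ≤ 4 * m ^ 2 / p r := div_nonneg (by positivity) (hp r hr).le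
    rw [hqdef]; positivity
  -- the vector function
  set f : ℝ → ℝ × ℝ := fun r => (a r, u r) with hfdef
  set f' : ℝ → ℝ × ℝ := fun r => (u r / p r, q r * a r) with hf'def
  -- main Gronwall estimate
  intro r hr
  have hcont : ContinuousOn f (Icc r₀ r) := by
    apply ContinuousOn.prodMk
    · exact (hdiffa.continuousOn).mono Icc_subset_Ici_self
    · exact (hdiffu.continuousOn).mono Icc_subset_Ici_self
  have hderiv : ∀ x ∈ Ico r₀ r, HasDerivWithinAt f (f' x) (Ici x) x := by
    intro x hx
    have hx' : x ∈ Ici r₀ := mem_Ici.mpr hx.1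
    have h1 := ((hda x hx').prodMk (hdu x hx')).mono (Ici_subset_Ici.mpr hx.1)
    exact h1
  have hbound : ∀ x ∈ Ico r₀ r, ‖f' x‖ ≤ K * ‖f x‖ + 0 := by
    intro x hx
    have hx' : x ∈ Ici r₀ := mem_Ici.mpr hx.1
    have hKnn : 0 ≤ K := le_trans (by positivity) (hK1 r₀ self_mem_Ici)
    rw [add_zero, hfdef, hf'def, Prod.norm_def, Prod.norm_def]
    simp only [Real.norm_eq_abs]
    have hmax : |a x| ≤ max |a x| |u x| := le_max_left _ _
    have hmax' : |u x| ≤ max |a x| |u x| := le_max_right _ _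
    apply max_le
    · have : |u x / p x| = (1 / p x) * |u x| := by
        rw [abs_div, abs_of_pos (hp x hx')]; ring
      rw [this]
      calc (1 / p x) * |u x| ≤ K * |u x| :=
            mul_le_mul_of_nonneg_right (hK1 x hx') (abs_nonneg _)
        _ ≤ K * max |a x| |u x| := mul_le_mul_of_nonneg_left hmax' hKnn
    · have : |q x * a x| = q x * |a x| := by
        rw [abs_mul, abs_of_nonneg (hq0 x hx')]
      rw [this]
      calc q x * |a x| ≤ K * |a x| :=
            mul_le_mul_of_nonneg_right (hKq x hx') (abs_nonneg _)
        _ ≤ K * max |a x| |u x| := mul_le_mul_of_nonneg_left hmax hKnn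
  have hinit0 : ‖f r₀‖ ≤ 0 := by
    rw [hfdef]; simp [ha0, hu0, Prod.norm_def]
  have := norm_le_gronwallBound_of_norm_deriv_right_le hcont hderiv hinit0 hbound r
    (right_mem_Icc.mpr hr)
  rw [gronwallBound_ε0_δ0] at this
  have habs : |a r| ≤ ‖f r‖ := by
    rw [hfdef, Prod.norm_def]; simp only [Real.norm_eq_abs]; exact le_max_left _ _
  have : |a r| ≤ 0 := le_trans habs this
  exact abs_eq_zero.mp (le_antisymm this (abs_nonneg _))
end

section
/- Let m ∈ ℝ, m₀ := max{0, m}, r₀ > 2m₀, and let ℓ ≥ 0 be an integer with ℓ ≠ 1. Suppose a : [r₀,∞) → ℝ is twice continuously differentiable and solves the Schwarzschild radial ODE with parameters (m, r₀, ℓ). Define β₀ := (2m/(ℓ(ℓ+1)−2))·((4m−r₀)·a(r₀) + r₀(r₀−2m)·a'(r₀)) and B(r) := a(r) − β₀/(r(r−2m)). Then (d/dr)(r(r−2m)·B'(r)) = (4m²/(r(r−2m)) + ℓ(ℓ+1))·B(r) for all r ≥ r₀. -/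
open Set Filter

/-- For `ℓ ≠ 1`, subtracting the particular solution `β₀/(r(r−2m))` from a
solution `a` of the inhomogeneous Schwarzschild radial ODE yields a solution `B` of the
homogeneous equation `(r(r−2m) B')' = (4m²/(r(r−2m)) + ℓ(ℓ+1)) B`. -/
theorem schwarzschild_radial_ode_homogenization
    (m r₀ : ℝ) (hr₀ : 2 * max 0 m < r₀) (ℓ : ℕ) (hℓ : ℓ ≠ 1)
    (a : ℝ → ℝ) (ha : ContDiffOn ℝ 2 a (Ici r₀))
    (hode : ∀ r ∈ Ici r₀,
      derivWithin (fun s => s * (s - 2 * m) * derivWithin a (Ici r₀) s) (Ici r₀) r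
        = (4 * m ^ 2 / (r * (r - 2 * m)) + (ℓ : ℝ) * ((ℓ : ℝ) + 1)) * a r
          - (2 * m / (r * (r - 2 * m))) *
            ((4 * m - r₀) * a r₀ + r₀ * (r₀ - 2 * m) * derivWithin a (Ici r₀) r₀))
    (β₀ : ℝ)
    (hβ₀ : β₀ = (2 * m / ((ℓ : ℝ) * ((ℓ : ℝ) + 1) - 2)) *
      ((4 * m - r₀) * a r₀ + r₀ * (r₀ - 2 * m) * derivWithin a (Ici r₀) r₀))
    (B : ℝ → ℝ) (hBdef : ∀ r, B r = a r - β₀ / (r * (r - 2 * m))) :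
    ∀ r ∈ Ici r₀,
      derivWithin (fun s => s * (s - 2 * m) * derivWithin B (Ici r₀) s) (Ici r₀) r
        = (4 * m ^ 2 / (r * (r - 2 * m)) + (ℓ : ℝ) * ((ℓ : ℝ) + 1)) * B r := by
  have hUD : UniqueDiffOn ℝ (Ici r₀) := uniqueDiffOn_Ici r₀
  have hL : (ℓ : ℝ) * ((ℓ : ℝ) + 1) - 2 ≠ 0 := by
    rcases Nat.lt_or_ge ℓ 2 with h | h
    · interval_cases ℓ
      · norm_num
      · exact absurd rfl hℓ
    · have h2 : (2:ℝ) ≤ (ℓ:ℝ) := by exact_mod_cast h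
      nlinarith
  have hpos : ∀ r ∈ Ici r₀, 0 < r ∧ 0 < r - 2 * m := by
    intro r hr
    have hr' : r₀ ≤ r := hr
    constructor
    · nlinarith [le_max_left 0 m]
    · nlinarith [le_max_right 0 m]
  have hune : ∀ r ∈ Ici r₀, r * (r - 2 * m) ≠ 0 := by
    intro r hr
    obtain ⟨h1, h2⟩ := hpos r hr
    positivity
  have haD : DifferentiableOn ℝ a (Ici r₀) := ha.differentiableOn (by norm_num)
  -- derivative of the correction
  have hu' : ∀ r : ℝ, HasDerivAt (fun s => s * (s - 2 * m)) (2 * r - 2 * m) r := by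
    intro r
    have h := (hasDerivAt_id r).mul ((hasDerivAt_id r).sub_const (2 * m))
    simp only [id_eq, one_mul, mul_one] at h
    exact h.congr_deriv (by ring)
  have hBderiv : ∀ r ∈ Ici r₀, derivWithin B (Ici r₀) r
      = derivWithin a (Ici r₀) r + β₀ * (2 * r - 2 * m) / (r * (r - 2 * m)) ^ 2 := by
    intro r hr
    have hne := hune r hr
    have hg : HasDerivAt (fun s => β₀ / (s * (s - 2 * m)))
        ((0 * (r * (r - 2 * m)) - β₀ * (2 * r - 2 * m)) / (r * (r - 2 * m)) ^ 2) r :=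
      (hasDerivAt_const r β₀).div (hu' r) hne
    have haW : HasDerivWithinAt a (derivWithin a (Ici r₀) r) (Ici r₀) r :=
      (haD r hr).hasDerivWithinAt
    have hB : HasDerivWithinAt B (derivWithin a (Ici r₀) r
        + β₀ * (2 * r - 2 * m) / (r * (r - 2 * m)) ^ 2) (Ici r₀) r := by
      have h := haW.sub hg.hasDerivWithinAt
      have hfun : B = fun s => a s - β₀ / (s * (s - 2 * m)) := funext hBdef
      rw [hfun]
      exact h.congr_deriv (by ring)
    exact hB.derivWithin (hUD r hr)
  intro r hr
  have hne := hune r hr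
  -- rewrite the function under the outer derivWithin
  have hcongr : Set.EqOn (fun s => s * (s - 2 * m) * derivWithin B (Ici r₀) s)
      (fun s => s * (s - 2 * m) * derivWithin a (Ici r₀) s
        + β₀ * (2 * s - 2 * m) / (s * (s - 2 * m))) (Ici r₀) := by
    intro s hs
    have hnes := hune s hs
    simp only []
    rw [hBderiv s hs]
    obtain ⟨hs1, hs2⟩ := hpos s hs
    field_simp [hs1.ne', hs2.ne']
  rw [derivWithin_congr hcongr (hcongr hr)]
  -- differentiability of F
  have hda : ContDiffOn ℝ 1 (derivWithin a (Ici r₀)) (Ici r₀) := by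
    exact ha.derivWithin hUD (by norm_num)
  have hF : DifferentiableWithinAt ℝ
      (fun s => s * (s - 2 * m) * derivWithin a (Ici r₀) s) (Ici r₀) r := by
    have : DifferentiableWithinAt ℝ (derivWithin a (Ici r₀)) (Ici r₀) r :=
      (hda.differentiableOn (by norm_num)) r hr
    exact (((differentiableWithinAt_id).mul
      ((differentiableWithinAt_id).sub (differentiableWithinAt_const _))).mul this)
  -- derivative of the correction term
  have hcorr : HasDerivAt (fun s => β₀ * (2 * s - 2 * m) / (s * (s - 2 * m)))
      ((β₀ * 2 * (r * (r - 2 * m)) - β₀ * (2 * r - 2 * m) * (2 * r - 2 * m))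
        / (r * (r - 2 * m)) ^ 2) r := by
    have hnum : HasDerivAt (fun s => β₀ * (2 * s - 2 * m)) (β₀ * 2) r := by
      have := (((hasDerivAt_id r).const_mul 2).sub_const (2 * m)).const_mul β₀
      exact this.congr_deriv (by ring)
    exact hnum.div (hu' r) hne
  have hsum : HasDerivWithinAt
      (fun s => s * (s - 2 * m) * derivWithin a (Ici r₀) s
        + β₀ * (2 * s - 2 * m) / (s * (s - 2 * m)))
      (derivWithin (fun s => s * (s - 2 * m) * derivWithin a (Ici r₀) s) (Ici r₀) r
        + (β₀ * 2 * (r * (r - 2 * m)) - β₀ * (2 * r - 2 * m) * (2 * r - 2 * m))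
          / (r * (r - 2 * m)) ^ 2) (Ici r₀) r :=
    hF.hasDerivWithinAt.add hcorr.hasDerivWithinAt
  rw [hsum.derivWithin (hUD r hr), hode r hr, hBdef r]
  have h2m : 2 * m * ((4 * m - r₀) * a r₀ + r₀ * (r₀ - 2 * m) * derivWithin a (Ici r₀) r₀)
      = β₀ * ((ℓ : ℝ) * ((ℓ : ℝ) + 1) - 2) := by
    rw [hβ₀]; field_simp
  have hC : 2 * m / (r * (r - 2 * m)) *
      ((4 * m - r₀) * a r₀ + r₀ * (r₀ - 2 * m) * derivWithin a (Ici r₀) r₀)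
      = β₀ * ((ℓ : ℝ) * ((ℓ : ℝ) + 1) - 2) / (r * (r - 2 * m)) := by
    rw [div_mul_eq_mul_div, h2m]
  rw [hC]
  have hX := mul_inv_cancel₀ hne
  simp only [div_eq_mul_inv, ← inv_pow]
  linear_combination (-2 * β₀ * (r * (r - 2 * m))⁻¹) * hX
end
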